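/- arXiv:2002.03183 — 11 statements merged into one kernel-verified Lean document; each statement's English description precedes it below -/
import Mathlib

section
/- Let G be a finite connected graph of order n ≥ 2. Then the remoteness ρ(G) = max over vertices v of (1/(n-1))·Σ_{w} d(v,w) satisfies ρ(G) ≤ n/2. -/
private lemma dist_getVert_le {V : Type*} {G : SimpleGraph V} (hG : G.Connected)
    {u v : V} (p : G.Walk u v) : ∀ i, G.dist u (p.getVert i) ≤ i := by
  induction p with
  | nil => intro i; simp [SimpleGraph.Walk.getVert, SimpleGraph.dist_self]
  | @cons a b c h q ih =>
    intro i
    cases i with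
    | zero => simp
    | succ i =>
      rw [SimpleGraph.Walk.getVert_cons_succ]
      calc G.dist a (q.getVert i) ≤ G.dist a b + G.dist b (q.getVert i) := hG.dist_triangle
        _ ≤ 1 + i := by
            gcongr
            · simpa using G.dist_le (SimpleGraph.Walk.cons h SimpleGraph.Walk.nil)
            · exact ih i
        _ = i + 1 := by omega

private lemma dist_getVert_right_le {V : Type*} {G : SimpleGraph V}
    {u v : V} (p : G.Walk u v) : ∀ i, G.dist (p.getVert i) v ≤ p.length - i := by
  induction p with
  | nil => intro i; simp [SimpleGraph.Walk.getVert]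
  | @cons a b c h q ih =>
    intro i
    cases i with
    | zero =>
      simpa using G.dist_le (SimpleGraph.Walk.cons h q)
    | succ i =>
      rw [SimpleGraph.Walk.getVert_cons_succ]
      have := ih i
      simp only [SimpleGraph.Walk.length_cons]
      omega

private lemma exists_dist_eq' {V : Type*} {G : SimpleGraph V} (hG : G.Connected)
    {v w : V} {j : ℕ} (hj : j ≤ G.dist v w) : ∃ u, G.dist v u = j := by
  obtain ⟨p, hp⟩ := hG.exists_walk_length_eq_dist v w
  refine ⟨p.getVert j, le_antisymm (dist_getVert_le hG p j) ?_⟩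
  have h2 := dist_getVert_right_le p j
  have h3 : G.dist v w ≤ G.dist v (p.getVert j) + G.dist (p.getVert j) w := hG.dist_triangle
  omega

private lemma sum_dist_le {V : Type*} [Fintype V] {G : SimpleGraph V} (hG : G.Connected)
    (v : V) : (∑ w, G.dist v w) * 2 ≤ Fintype.card V * (Fintype.card V - 1) := by
  classical
  set n := Fintype.card V with hn
  -- every distance is < n
  have hdlt : ∀ w, G.dist v w < n := by
    intro w
    obtain ⟨p, hp, hlen⟩ := hG.exists_path_of_dist v w
    rw [← hlen]; exact hp.length_lt
  -- layer cake
  have hlayer : (∑ w, G.dist v w)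
      = ∑ k ∈ Finset.range n, (Finset.univ.filter fun w => k < G.dist v w).card := by
    have : ∀ w, G.dist v w = ((Finset.range n).filter fun k => k < G.dist v w).card := by
      intro w
      have : ((Finset.range n).filter fun k => k < G.dist v w) = Finset.range (G.dist v w) := by
        ext k
        simp only [Finset.mem_filter, Finset.mem_range]
        have := hdlt w
        omega
      rw [this, Finset.card_range]
    calc (∑ w, G.dist v w)
        = ∑ w, ((Finset.range n).filter fun k => k < G.dist v w).card := by
          exact Finset.sum_congr rfl fun w _ => this w
      _ = ∑ w : V, ∑ k ∈ Finset.range n, if k < G.dist v w then 1 else 0 := by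
          simp only [Finset.card_filter]
      _ = ∑ k ∈ Finset.range n, ∑ w : V, if k < G.dist v w then 1 else 0 :=
          Finset.sum_comm
      _ = ∑ k ∈ Finset.range n, (Finset.univ.filter fun w => k < G.dist v w).card := by
          simp only [Finset.card_filter]
  -- each layer bound
  have hbound : ∀ k, (Finset.univ.filter fun w => k < G.dist v w).card ≤ n - (k + 1) := by
    intro k
    rcases (Finset.univ.filter fun w => k < G.dist v w).eq_empty_or_nonempty with he | hne
    · simp [he]
    · obtain ⟨w, hw⟩ := hne
      rw [Finset.mem_filter] at hw
      -- at least k+1 vertices at distance ≤ k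
      have hk1 : k + 1 ≤ (Finset.univ.filter fun u => ¬ k < G.dist v u).card := by
        have hex : ∀ j : ℕ, ∃ u, G.dist v u = min j k := fun j => by
          refine exists_dist_eq' hG (w := w) ?_
          omega
        choose f hf using hex
        calc k + 1 = (Finset.range (k + 1)).card := (Finset.card_range _).symm
          _ ≤ (Finset.univ.filter fun u => ¬ k < G.dist v u).card := by
              apply Finset.card_le_card_of_injOn f
              · intro j hj
                rw [Finset.mem_coe, Finset.mem_range] at hj
                rw [Finset.mem_coe, Finset.mem_filter]
                refine ⟨Finset.mem_univ _, ?_⟩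
                have := hf j
                omega
              · intro a ha b hb hab
                rw [Finset.mem_coe, Finset.mem_range] at ha hb
                have h1 := hf a
                have h2 := hf b
                rw [hab] at h1
                omega
      have hsplit := Finset.card_filter_add_card_filter_not
        (s := (Finset.univ : Finset V)) (p := fun w => k < G.dist v w)
      rw [Finset.card_univ] at hsplit
      omega
  calc (∑ w, G.dist v w) * 2
      ≤ (∑ k ∈ Finset.range n, (n - (k + 1))) * 2 := by
        rw [hlayer]; gcongr with k hk; exact hbound k
    _ = (∑ k ∈ Finset.range n, k) * 2 := by
        have : ∑ k ∈ Finset.range n, (n - (k + 1)) = ∑ k ∈ Finset.range n, k := by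
          rw [← Finset.sum_range_reflect (fun j => j) n]
          exact Finset.sum_congr rfl fun k hk => by omega
        rw [this]
    _ = n * (n - 1) := Finset.sum_range_id_mul_two n

/-- The remoteness of a connected graph of order `n ≥ 2` is at most `n/2`. -/
theorem remoteness_le_half_order {V : Type*} [Fintype V] [Nonempty V]
    (G : SimpleGraph V) (hG : G.Connected) (hn : 2 ≤ Fintype.card V) :
    Finset.univ.sup' Finset.univ_nonempty
      (fun v => (∑ w, (G.dist v w : ℝ)) / ((Fintype.card V : ℝ) - 1))
      ≤ (Fintype.card V : ℝ) / 2 := by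
  apply Finset.sup'_le
  intro v _
  have hS := sum_dist_le hG v
  set n := Fintype.card V with hndef
  have h1 : (0:ℝ) < (n:ℝ) - 1 := by
    have : (2:ℝ) ≤ (n:ℝ) := by exact_mod_cast hn
    linarith
  rw [div_le_div_iff₀ h1 (by norm_num)]
  have hcast : (∑ w, (G.dist v w : ℝ)) = ((∑ w, G.dist v w : ℕ) : ℝ) := by push_cast; ring
  rw [hcast]
  have h2 : (((∑ w, G.dist v w) * 2 : ℕ) : ℝ) ≤ ((n * (n - 1) : ℕ) : ℝ) := by
    exact_mod_cast hS
  have h3 : ((n * (n - 1) : ℕ) : ℝ) = (n:ℝ) * ((n:ℝ) - 1) := by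
    have : 1 ≤ n := by omega
    push_cast [this]
    ring
  calc ((∑ w, G.dist v w : ℕ) : ℝ) * 2 = (((∑ w, G.dist v w) * 2 : ℕ) : ℝ) := by push_cast; ring
    _ ≤ ((n * (n - 1) : ℕ) : ℝ) := h2
    _ = (n:ℝ) * ((n:ℝ) - 1) := h3
end

section
/- Let G be a finite connected graph of order n ≥ 2. Then the proximity π(G) = min over vertices v of (1/(n-1))·Σ_{w} d(v,w) satisfies π(G) ≤ (n+1)/4 if n is odd, and π(G) ≤ (n+1)/4 + 1/(4(n-1)) if n is even. -/
open Finset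

lemma geodesic_chain {V : Type*} (G : SimpleGraph V) (hG : G.Connected) (c x : V) :
    ∃ q : ℕ → V, q 0 = c ∧ q (G.dist c x) = x ∧
      ∀ i j : ℕ, i ≤ j → j ≤ G.dist c x → G.dist (q i) (q j) + i = j := by
  obtain ⟨W, hW⟩ := hG.exists_walk_length_eq_dist c x
  have key : ∀ d i : ℕ, i + d ≤ W.length →
      G.dist (W.getVert i) (W.getVert (i + d)) ≤ d := by
    intro d
    induction d with
    | zero => intro i _; simp [SimpleGraph.dist_self]
    | succ d ih =>
      intro i h
      have h1 : G.dist (W.getVert (i + d)) (W.getVert (i + d + 1)) ≤ 1 :=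
        le_of_eq (SimpleGraph.dist_eq_one_iff_adj.mpr (W.adj_getVert_succ (by omega)))
      calc G.dist (W.getVert i) (W.getVert (i + (d+1)))
          ≤ G.dist (W.getVert i) (W.getVert (i + d))
            + G.dist (W.getVert (i + d)) (W.getVert (i + d + 1)) := by
            have := hG.dist_triangle (u := W.getVert i) (v := W.getVert (i+d))
              (w := W.getVert (i+d+1))
            simpa [← add_assoc] using this
        _ ≤ d + 1 := add_le_add (ih i (by omega)) h1
  refine ⟨W.getVert, W.getVert_zero, by rw [← hW]; exact W.getVert_length, ?_⟩
  intro i j hij hj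
  rw [← hW] at hj
  have hXij : G.dist (W.getVert i) (W.getVert j) ≤ j - i := by
    have := key (j - i) i (by omega)
    have hji : i + (j - i) = j := by omega
    rwa [hji] at this
  have hX0i : G.dist c (W.getVert i) ≤ i := by
    have := key i 0 (by omega)
    simpa [W.getVert_zero] using this
  have hXjL : G.dist (W.getVert j) x ≤ W.length - j := by
    have := key (W.length - j) j (by omega)
    have h' : j + (W.length - j) = W.length := by omega
    rwa [h', W.getVert_length] at this
  have t2 : G.dist c x ≤ G.dist c (W.getVert j) + G.dist (W.getVert j) x :=
    hG.dist_triangle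
  have t1 : G.dist c (W.getVert j) ≤ G.dist c (W.getVert i)
      + G.dist (W.getVert i) (W.getVert j) := hG.dist_triangle
  omega

lemma median_ball {V : Type*} [Fintype V] (G : SimpleGraph V) (hG : G.Connected) (c : V)
    (hmed : ∀ v : V, (∑ w, G.dist c w) ≤ ∑ w, G.dist v w) :
    ∀ r : ℕ, (∃ w, r < G.dist c w) →
      2 * r + 1 ≤ (Finset.univ.filter (fun w => G.dist c w ≤ r)).card := by
  intro r
  induction r with
  | zero =>
    intro _
    have hc : c ∈ Finset.univ.filter (fun w => G.dist c w ≤ 0) := by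
      simp [SimpleGraph.dist_self]
    simpa using Finset.card_pos.mpr ⟨c, hc⟩
  | succ r ih =>
    intro hw
    by_contra hcon
    push_neg at hcon
    set R : ℕ := r + 1 with hRdef
    obtain ⟨w, hwR⟩ := hw
    -- the previous ball
    have ihcard : 2 * r + 1 ≤ (Finset.univ.filter (fun y => G.dist c y ≤ r)).card :=
      ih ⟨w, by omega⟩
    set A := Finset.univ.filter (fun y => G.dist c y ≤ r) with hA
    set B := Finset.univ.filter (fun y => G.dist c y ≤ R) with hB
    set S := Finset.univ.filter (fun y => G.dist c y = R) with hS
    -- find x at distance exactly R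
    obtain ⟨qw, hqw0, hqwL, hqw⟩ := geodesic_chain G hG c w
    have hxdist : G.dist c (qw R) = R := by
      have := hqw 0 R (by omega) (by omega)
      simpa [hqw0] using this
    set x := qw R with hx
    have hxS : x ∈ S := by simp [hS, hxdist]
    -- B splits as A and S
    have hsplit : B.card = A.card + S.card := by
      have h1 : B.filter (fun y => G.dist c y ≤ r) = A := by
        ext y; simp [hA, hB]; omega
      have h2 : B.filter (fun y => ¬ G.dist c y ≤ r) = S := by
        ext y; simp [hS, hB]; omega
      rw [← h1, ← h2]
      exact (Finset.card_filter_add_card_filter_not _).symm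
    have hcardB : B.card ≤ 2 * R := by omega
    have hScard : S.card = 1 := by
      have : 1 ≤ S.card := Finset.card_pos.mpr ⟨x, hxS⟩
      omega
    have hAcard : A.card = 2 * r + 1 := by omega
    -- sphere is a singleton
    have hsph : ∀ y : V, G.dist c y = R → y = x := by
      obtain ⟨a, ha⟩ := Finset.card_eq_one.mp hScard
      intro y hy
      have hyS : y ∈ S := by simp [hS, hy]
      have : y = a := by rwa [ha, Finset.mem_singleton] at hyS
      have hxa : x = a := by rwa [ha, Finset.mem_singleton] at hxS
      rw [this, hxa]
    -- far set
    set F := Finset.univ.filter (fun y => R ≤ G.dist c y) with hF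
    have hfar : ∀ y : V, R ≤ G.dist c y → G.dist x y + R = G.dist c y := by
      intro y hy
      obtain ⟨qy, hqy0, hqyL, hqy⟩ := geodesic_chain G hG c y
      have h1 : G.dist c (qy R) = R := by
        have := hqy 0 R (by omega) (by omega)
        simpa [hqy0] using this
      have h2 : G.dist (qy R) (qy (G.dist c y)) + R = G.dist c y :=
        hqy R (G.dist c y) hy le_rfl
      rw [hqyL] at h2
      rw [← hsph (qy R) h1]
      exact h2
    -- cardinalities
    set n := Fintype.card V with hn
    have hAF : A.card + F.card = n := by
      have h2 : Finset.univ.filter (fun y => ¬ G.dist c y ≤ r) = F := by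
        ext y; simp [hF]; omega
      rw [← h2]
      simpa using Finset.card_filter_add_card_filter_not
        (s := (Finset.univ : Finset V)) (p := fun y => G.dist c y ≤ r)
    have hwB : w ∉ B := by simp [hB]; omega
    have hnlarge : 2 * R + 1 ≤ n := by
      have : B ⊂ Finset.univ := Finset.ssubset_univ_iff.mpr (fun h => hwB (h ▸ Finset.mem_univ w))
      have := Finset.card_lt_card this
      simp only [Finset.card_univ] at this
      omega
    -- the comparison vertex p on a geodesic from c to x
    obtain ⟨q, hq0, hqR, hq⟩ := geodesic_chain G hG c x
    rw [hxdist] at hqR hq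
    set t : ℕ := min R (n - 2 * R) with ht
    have ht1 : 1 ≤ t := by omega
    have htR : t ≤ R := by omega
    have htn : t + 2 * R ≤ n := by omega
    set p := q t with hp
    have hcp : G.dist c p = t := by
      have := hq 0 t (by omega) htR
      simpa [hq0] using this
    have hpx : G.dist p x + t = R := by
      have := hq t R htR le_rfl
      rw [hqR, ← hp] at this
      omega
    -- far sum: exact
    have hfarp : ∀ y ∈ F, G.dist p y + t = G.dist c y := by
      intro y hy
      simp only [hF, Finset.mem_filter] at hy
      have h1 := hfar y hy.2
      have hle : G.dist p y + t ≤ G.dist c y := by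
        have htri := hG.dist_triangle (u := p) (v := x) (w := y)
        omega
      have hge : G.dist c y ≤ t + G.dist p y := by
        have := hG.dist_triangle (u := c) (v := p) (w := y)
        omega
      omega
    have e1 : (∑ y ∈ F, G.dist p y) + F.card * t = ∑ y ∈ F, G.dist c y := by
      have h := Finset.sum_congr rfl hfarp
      rwa [Finset.sum_add_distrib, Finset.sum_const, smul_eq_mul] at h
    classical
    -- geodesic image set
    set geo := (Finset.range R).image q with hgeo
    have hqinj : ∀ i ∈ Finset.range R, ∀ j ∈ Finset.range R, q i = q j → i = j := by
      intro i hi j hj hij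
      simp only [Finset.mem_range] at hi hj
      rcases le_total i j with h | h
      · have h2 := hq i j h (by omega)
        rw [← hij] at h2
        simp [SimpleGraph.dist_self] at h2
        omega
      · have h2 := hq j i h (by omega)
        rw [hij] at h2
        simp [SimpleGraph.dist_self] at h2
        omega
    have hgeoA : geo ⊆ A := by
      intro y hy
      simp only [hgeo, Finset.mem_image, Finset.mem_range] at hy
      obtain ⟨i, hi, rfl⟩ := hy
      have := hq 0 i (by omega) (by omega)
      simp only [hq0] at this
      simp only [hA, Finset.mem_filter, Finset.mem_univ, true_and]
      omega
    have hgeocard : geo.card = R := by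
      rw [hgeo, Finset.card_image_of_injOn (fun a ha b hb => hqinj a ha b hb),
        Finset.card_range]
    set rest := A \ geo with hrest
    have hrestcard : rest.card = r := by
      rw [hrest, Finset.card_sdiff_of_subset hgeoA, hgeocard, hAcard]
      omega
    -- near estimate
    have e2 : (∑ y ∈ rest, G.dist p y) ≤ (∑ y ∈ rest, G.dist c y) + rest.card * t := by
      have hpt : ∀ y ∈ rest, G.dist p y ≤ G.dist c y + t := by
        intro y _
        have h1 := hG.dist_triangle (u := p) (v := c) (w := y)
        have h2 : G.dist p c = t := by rw [SimpleGraph.dist_comm]; exact hcp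
        omega
      calc (∑ y ∈ rest, G.dist p y) ≤ ∑ y ∈ rest, (G.dist c y + t) :=
            Finset.sum_le_sum hpt
        _ = (∑ y ∈ rest, G.dist c y) + rest.card * t := by
            rw [Finset.sum_add_distrib, Finset.sum_const, smul_eq_mul]
    -- geodesic sums
    have hsum_img_p : (∑ y ∈ geo, G.dist p y) = ∑ i ∈ Finset.range R, G.dist p (q i) :=
      Finset.sum_image hqinj
    have hsum_img_c : (∑ y ∈ geo, G.dist c y) = ∑ i ∈ Finset.range R, G.dist c (q i) :=
      Finset.sum_image hqinj
    have hgc : (∑ i ∈ Finset.range R, G.dist c (q i)) = ∑ i ∈ Finset.range R, i := by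
      refine Finset.sum_congr rfl fun i hi => ?_
      simp only [Finset.mem_range] at hi
      have := hq 0 i (by omega) (by omega)
      simp only [hq0] at this
      omega
    -- split the geodesic sum at t
    have hsplitp : (∑ i ∈ Finset.Ico 0 t, G.dist p (q i))
        + (∑ i ∈ Finset.Ico t R, G.dist p (q i))
        = ∑ i ∈ Finset.range R, G.dist p (q i) := by
      rw [Finset.range_eq_Ico]
      exact Finset.sum_Ico_consecutive _ (by omega) htR
    have hsplitid : (∑ i ∈ Finset.Ico 0 t, i) + (∑ i ∈ Finset.Ico t R, i)
        = ∑ i ∈ Finset.range R, i := by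
      rw [Finset.range_eq_Ico]
      exact Finset.sum_Ico_consecutive _ (by omega) htR
    have hS1 : (∑ i ∈ Finset.Ico 0 t, G.dist p (q i)) + (∑ i ∈ Finset.Ico 0 t, i)
        = t * t := by
      rw [← Finset.sum_add_distrib]
      have : ∀ i ∈ Finset.Ico 0 t, G.dist p (q i) + i = t := by
        intro i hi
        simp only [Finset.mem_Ico] at hi
        have h2 := hq i t (by omega) htR
        rw [SimpleGraph.dist_comm (u := q i), ← hp] at h2
        omega
      rw [Finset.sum_congr rfl this, Finset.sum_const, smul_eq_mul, Nat.card_Ico]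
      simp
    have hS2 : (∑ i ∈ Finset.Ico t R, G.dist p (q i)) + (R - t) * t
        = ∑ i ∈ Finset.Ico t R, i := by
      have hpt2 : ∀ i ∈ Finset.Ico t R, G.dist p (q i) + t = i := by
        intro i hi
        simp only [Finset.mem_Ico] at hi
        have h2 := hq t i hi.1 (by omega)
        rw [← hp] at h2
        omega
      have := Finset.sum_congr rfl hpt2
      rw [Finset.sum_add_distrib, Finset.sum_const, smul_eq_mul, Nat.card_Ico] at this
      omega
    have hA1 : (∑ i ∈ Finset.Ico 0 t, i) * 2 = t * (t - 1) := by
      rw [← Finset.range_eq_Ico]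
      exact Finset.sum_range_id_mul_two t
    have hgauss : (∑ i ∈ Finset.range R, i) * 2 = R * (R - 1) :=
      Finset.sum_range_id_mul_two R
    -- partition of the total sums
    have hnotF : Finset.univ.filter (fun y => ¬ R ≤ G.dist c y) = A := by
      ext y; simp [hA]; omega
    have hDp : (∑ y ∈ F, G.dist p y) + ((∑ y ∈ rest, G.dist p y)
        + (∑ y ∈ geo, G.dist p y)) = ∑ y, G.dist p y := by
      rw [Finset.sum_sdiff hgeoA]
      rw [← hnotF, hF]
      exact Finset.sum_filter_add_sum_filter_not _ _ _
    have hDc : (∑ y ∈ F, G.dist c y) + ((∑ y ∈ rest, G.dist c y)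
        + (∑ y ∈ geo, G.dist c y)) = ∑ y, G.dist c y := by
      rw [Finset.sum_sdiff hgeoA]
      rw [← hnotF, hF]
      exact Finset.sum_filter_add_sum_filter_not _ _ _
    -- final contradiction
    have hmedp := hmed p
    have hcF : F.card + (2 * r + 1) = n := by omega
    -- show ∑ dist p + t ≤ ∑ dist c
    have hfinal : (∑ y, G.dist p y) + t ≤ ∑ y, G.dist c y := by
      rw [← hDp, ← hDc, hsum_img_p, hsum_img_c, hgc, ← hsplitp, ← hsplitid]
      have hR1 : 1 ≤ R := by omega
      zify [htR, ht1, hR1] at e1 e2 hS1 hS2 hA1 hrestcard hcF htn ⊢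
      have hR' : (R : ℤ) = (r : ℤ) + 1 := by exact_mod_cast hRdef
      have hm1 : ((F.card : ℤ)) * t = (n : ℤ) * t - 2 * ((r : ℤ) * t) - t := by
        have h : (F.card : ℤ) = (n : ℤ) - 2 * r - 1 := by omega
        rw [h]; ring
      have hm2 : ((rest.card : ℤ)) * t = (r : ℤ) * t := by rw [hrestcard]
      have hm3 : (R : ℤ) * t = (r : ℤ) * t + t := by rw [hR']; ring
      have hkey : (t : ℤ) ≤ (n : ℤ) * t - 2 * ((r : ℤ) * t) - t - (t : ℤ) * t := by
        have h1 : (1 : ℤ) ≤ (n : ℤ) - 2 * r - 1 - t := by omega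
        have h2 : (0 : ℤ) ≤ (t : ℤ) := by positivity
        have h3 := mul_le_mul_of_nonneg_left h1 h2
        have h4 : (t : ℤ) * ((n : ℤ) - 2 * r - 1 - t)
            = (n : ℤ) * t - 2 * ((r : ℤ) * t) - t - (t : ℤ) * t := by ring
        rw [h4] at h3
        linarith
      linarith [e1, e2, hS1, hS2, hA1, hm1, hm2, hm3, hkey]
    omega

/-- Bound on the proximity of a connected graph of order `n ≥ 2`. -/
theorem proximity_le_of_order {V : Type*} [Fintype V] [Nonempty V]
    (G : SimpleGraph V) (hG : G.Connected) (hn : 2 ≤ Fintype.card V) :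
    (Odd (Fintype.card V) →
      Finset.univ.inf' Finset.univ_nonempty
        (fun v => (∑ w, (G.dist v w : ℝ)) / ((Fintype.card V : ℝ) - 1))
        ≤ ((Fintype.card V : ℝ) + 1) / 4) ∧
    (Even (Fintype.card V) →
      Finset.univ.inf' Finset.univ_nonempty
        (fun v => (∑ w, (G.dist v w : ℝ)) / ((Fintype.card V : ℝ) - 1))
        ≤ ((Fintype.card V : ℝ) + 1) / 4 + 1 / (4 * ((Fintype.card V : ℝ) - 1))) := by
  classical
  set n := Fintype.card V with hn'
  obtain ⟨c, -, hmed⟩ := Finset.exists_min_image Finset.univ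
    (fun v => ∑ w, G.dist v w) ⟨Classical.arbitrary V, Finset.mem_univ _⟩
  have hmed' : ∀ v, (∑ w, G.dist c w) ≤ ∑ w, G.dist v w :=
    fun v => hmed v (Finset.mem_univ v)
  have hball := median_ball G hG c hmed'
  have hdlt : ∀ w, G.dist c w < n := by
    intro w
    obtain ⟨p, hp, hl⟩ := hG.exists_path_of_dist c w
    calc G.dist c w = p.length := hl.symm
      _ < n := hp.length_lt
  have hsum : (∑ w, G.dist c w)
      = ∑ k ∈ Finset.range (n-1), (Finset.univ.filter (fun w => k < G.dist c w)).card := by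
    calc (∑ w, G.dist c w)
        = ∑ w, ((Finset.range (n-1)).filter (fun k => k < G.dist c w)).card := by
          refine Finset.sum_congr rfl fun w _ => ?_
          have h1 : (Finset.range (n-1)).filter (fun k => k < G.dist c w)
              = Finset.range (G.dist c w) := by
            ext k
            simp only [Finset.mem_range, Finset.mem_filter]
            have := hdlt w
            omega
          rw [h1, Finset.card_range]
      _ = ∑ w, ∑ k ∈ Finset.range (n-1), if k < G.dist c w then 1 else 0 := by
          refine Finset.sum_congr rfl fun w _ => ?_
          rw [Finset.card_filter]
      _ = ∑ k ∈ Finset.range (n-1), ∑ w, if k < G.dist c w then 1 else 0 :=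
          Finset.sum_comm
      _ = ∑ k ∈ Finset.range (n-1), (Finset.univ.filter (fun w => k < G.dist c w)).card := by
          refine Finset.sum_congr rfl fun k _ => ?_
          rw [Finset.card_filter]
  have hlev : ∀ k : ℕ, (Finset.univ.filter (fun w => k < G.dist c w)).card
      ≤ n - (2*k+1) := by
    intro k
    by_cases hk : ∃ w, k < G.dist c w
    · have h1 := hball k hk
      have h2 : (Finset.univ.filter (fun w => G.dist c w ≤ k)).card
          + (Finset.univ.filter (fun w => ¬ G.dist c w ≤ k)).card = n := by
        simpa using Finset.card_filter_add_card_filter_not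
          (s := (Finset.univ : Finset V)) (p := fun w => G.dist c w ≤ k)
      have h3 : Finset.univ.filter (fun w => ¬ G.dist c w ≤ k)
          = Finset.univ.filter (fun w => k < G.dist c w) := by
        ext y
        simp only [Finset.mem_filter, Finset.mem_univ, true_and, not_le]
      rw [h3] at h2
      omega
    · push_neg at hk
      have h0 : Finset.univ.filter (fun w => k < G.dist c w) = ∅ := by
        apply Finset.filter_eq_empty_iff.mpr
        intro w _
        exact not_lt.mpr (hk w)
      simp [h0]
  set m := n / 2 with hm
  have hhead : ∀ K : ℕ, 2*K ≤ n → (∑ k ∈ Finset.range K, (n - (2*k+1))) = K * (n - K) := by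
    intro K
    induction K with
    | zero => simp
    | succ K ihK =>
      intro h
      rw [Finset.sum_range_succ, ihK (by omega)]
      have h1 : 2*K+1 ≤ n := by omega
      have h2 : K ≤ n := by omega
      have h3 : K+1 ≤ n := by omega
      zify [h1, h2, h3]
      ring
  have hDbound : (∑ w, G.dist c w) ≤ m * (n - m) := by
    rw [hsum]
    have hmn : m ≤ n - 1 := by omega
    calc (∑ k ∈ Finset.range (n-1), (Finset.univ.filter (fun w => k < G.dist c w)).card)
        ≤ ∑ k ∈ Finset.range (n-1), (n - (2*k+1)) :=
          Finset.sum_le_sum fun k _ => hlev k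
      _ = (∑ k ∈ Finset.Ico 0 m, (n - (2*k+1))) + ∑ k ∈ Finset.Ico m (n-1), (n - (2*k+1)) := by
          rw [Finset.range_eq_Ico, ← Finset.sum_Ico_consecutive _ (Nat.zero_le m) hmn]
      _ = (∑ k ∈ Finset.range m, (n - (2*k+1))) + 0 := by
          rw [← Finset.range_eq_Ico]
          congr 1
          apply Finset.sum_eq_zero
          intro k hk
          simp only [Finset.mem_Ico] at hk
          omega
      _ = m * (n - m) := by rw [add_zero]; exact hhead m (by omega)
  -- pass to the reals
  have hpos : (0:ℝ) < (n:ℝ) - 1 := by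
    have : (2:ℝ) ≤ (n:ℝ) := by exact_mod_cast hn
    linarith
  have hinf : Finset.univ.inf' Finset.univ_nonempty
      (fun v => (∑ w, (G.dist v w : ℝ)) / ((n : ℝ) - 1))
      ≤ (∑ w, (G.dist c w : ℝ)) / ((n:ℝ) - 1) :=
    Finset.inf'_le _ (Finset.mem_univ c)
  have hDr : (∑ w, (G.dist c w : ℝ)) ≤ ((m * (n - m) : ℕ) : ℝ) := by
    rw [← Nat.cast_sum]
    exact_mod_cast hDbound
  have hmge : 1 ≤ m := by omega
  constructor
  · intro hodd
    refine le_trans hinf ?_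
    rw [div_le_iff₀ hpos]
    have hb : n = 2*m + 1 := by
      have := Nat.odd_iff.mp hodd
      omega
    have hmm : m * (n - m) = m * (m+1) := by
      congr 1
      omega
    rw [hmm] at hDr
    have hnr : (n:ℝ) = 2*(m:ℝ) + 1 := by exact_mod_cast hb
    have hDr' : (∑ w, (G.dist c w : ℝ)) ≤ (m:ℝ) * ((m:ℝ)+1) := by
      refine le_trans hDr (le_of_eq ?_)
      push_cast
      ring
    rw [hnr]
    nlinarith [hDr']
  · intro heven
    refine le_trans hinf ?_
    rw [div_le_iff₀ hpos]
    have hb : n = 2*m := by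
      have := Nat.even_iff.mp heven
      omega
    have hmm : m * (n - m) = m * m := by
      congr 1
      omega
    rw [hmm] at hDr
    have hnr : (n:ℝ) = 2*(m:ℝ) := by exact_mod_cast hb
    have hDr' : (∑ w, (G.dist c w : ℝ)) ≤ (m:ℝ) * (m:ℝ) := by
      refine le_trans hDr (le_of_eq ?_)
      push_cast
      ring
    have hmr : (1:ℝ) ≤ (m:ℝ) := by exact_mod_cast hmge
    have hne : (2*(m:ℝ) - 1) ≠ 0 := by nlinarith
    have heq : (((2*(m:ℝ)) + 1) / 4 + 1 / (4 * ((2*(m:ℝ)) - 1))) * ((2*(m:ℝ)) - 1)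
        = (m:ℝ) * (m:ℝ) := by
      field_simp
      ring
    rw [hnr, heq]
    exact hDr'
end

section
/- Let u be a vertex of a connected triangle-free graph G of minimum degree δ, and suppose both the sphere N_i(u) of vertices at distance i from u and the sphere N_{i+1}(u) are nonempty. Then |N_{i-1}(u)| + |N_i(u)| + |N_{i+1}(u)| + |N_{i+2}(u)| ≥ 2δ. -/
/-- The set of vertices at distance exactly `j` from `u` (with `j : ℤ`, so empty for `j < 0`). -/
noncomputable def SimpleGraph.isphere {V : Type*} [Fintype V] (G : SimpleGraph V) (u : V) (j : ℤ) : Finset V :=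
  Finset.univ.filter (fun w => (G.dist u w : ℤ) = j)

open SimpleGraph Finset

lemma dist_le_succ_of_adj {V : Type*} (G : SimpleGraph V) (hG : G.Connected)
    {u a b : V} (hab : G.Adj a b) : G.dist u b ≤ G.dist u a + 1 := by
  have := hG.dist_triangle (u := u) (v := a) (w := b)
  rwa [SimpleGraph.dist_eq_one_iff_adj.mpr hab] at this

lemma exists_adj_dist_pred {V : Type*} (G : SimpleGraph V) (hG : G.Connected)
    {u y : V} {n : ℕ} (h : G.dist u y = n + 1) :
    ∃ x, G.Adj x y ∧ G.dist u x = n := by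
  obtain ⟨p, hp⟩ := hG.exists_walk_length_eq_dist u y
  rw [h] at hp
  cases p with
  | nil => simp at hp
  | cons hadj q =>
    obtain ⟨x, r, hxy, heq⟩ := SimpleGraph.Walk.exists_cons_eq_concat hadj q
    refine ⟨x, hxy, le_antisymm ?_ ?_⟩
    · have hr : r.length = n := by
        have := congrArg SimpleGraph.Walk.length heq
        simp only [SimpleGraph.Walk.length_cons, SimpleGraph.Walk.length_concat] at this
        simp only [SimpleGraph.Walk.length_cons] at hp
        omega
      calc G.dist u x ≤ r.length := SimpleGraph.dist_le r
        _ = n := hr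
    · have := dist_le_succ_of_adj G hG (u := u) hxy
      omega

/-- In a connected triangle-free graph of minimum degree `δ`, if the spheres of radii `i`
and `i+1` around `u` are nonempty, then the four spheres of radii `i-1, i, i+1, i+2`
together contain at least `2δ` vertices. -/
theorem four_spheres_triangle_free {V : Type*} [Fintype V] [DecidableEq V]
    (G : SimpleGraph V) [DecidableRel G.Adj] (hG : G.Connected)
    (htf : G.CliqueFree 3) (δ : ℕ) (hδ : ∀ v, δ ≤ G.degree v)
    (u : V) (i : ℕ)
    (h1 : (G.isphere u i).Nonempty) (h2 : (G.isphere u (i + 1)).Nonempty) :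
    2 * δ ≤ (G.isphere u ((i : ℤ) - 1)).card + (G.isphere u i).card
      + (G.isphere u ((i : ℤ) + 1)).card + (G.isphere u ((i : ℤ) + 2)).card := by
  obtain ⟨y, hy⟩ := h2
  simp only [SimpleGraph.isphere, mem_filter] at hy
  have hdy : G.dist u y = i + 1 := by exact_mod_cast hy.2
  obtain ⟨x, hxy, hdx⟩ := exists_adj_dist_pred G hG hdy
  -- neighbors of x and y are disjoint (triangle-free)
  have hdisj : Disjoint (G.neighborFinset x) (G.neighborFinset y) := by
    rw [Finset.disjoint_left]
    intro z hzx hzy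
    rw [SimpleGraph.mem_neighborFinset] at hzx hzy
    exact htf {x, y, z} (by
      refine SimpleGraph.is3Clique_iff.mpr ⟨x, y, z, hxy, hzx, hzy, rfl⟩)
  -- the union S of the four spheres
  set S := (G.isphere u ((i : ℤ) - 1)) ∪ (G.isphere u i) ∪ (G.isphere u ((i : ℤ) + 1))
      ∪ (G.isphere u ((i : ℤ) + 2)) with hS
  have hmem : ∀ z : V, ((i:ℤ) - 1 ≤ (G.dist u z : ℤ)) → ((G.dist u z : ℤ) ≤ (i:ℤ) + 2) → z ∈ S := by
    intro z hl hr
    have : (G.dist u z : ℤ) = (i:ℤ) - 1 ∨ (G.dist u z : ℤ) = i ∨ (G.dist u z : ℤ) = (i:ℤ) + 1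
        ∨ (G.dist u z : ℤ) = (i:ℤ) + 2 := by omega
    simp only [hS, Finset.mem_union, SimpleGraph.isphere, mem_filter, Finset.mem_univ, true_and]
    tauto
  have hsub : G.neighborFinset x ∪ G.neighborFinset y ⊆ S := by
    intro z hz
    rw [Finset.mem_union, SimpleGraph.mem_neighborFinset, SimpleGraph.mem_neighborFinset] at hz
    rcases hz with hz | hz
    · have h1' := dist_le_succ_of_adj G hG (u := u) hz
      have h2' := dist_le_succ_of_adj G hG (u := u) hz.symm
      apply hmem <;> push_cast <;> omega
    · have h1' := dist_le_succ_of_adj G hG (u := u) hz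
      have h2' := dist_le_succ_of_adj G hG (u := u) hz.symm
      apply hmem <;> push_cast <;> omega
  have hcard : 2 * δ ≤ (G.neighborFinset x ∪ G.neighborFinset y).card := by
    rw [Finset.card_union_of_disjoint hdisj]
    have := hδ x; have := hδ y
    simp only [SimpleGraph.card_neighborFinset_eq_degree]
    omega
  calc 2 * δ ≤ (G.neighborFinset x ∪ G.neighborFinset y).card := hcard
    _ ≤ S.card := Finset.card_le_card hsub
    _ ≤ _ := by
        apply le_trans (Finset.card_union_le _ _)
        gcongr ?_ + _
        apply le_trans (Finset.card_union_le _ _)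
        gcongr ?_ + _
        exact Finset.card_union_le _ _
end

section
/- Let u be a vertex of a connected triangle-free graph G of minimum degree δ, and suppose the sphere N_i(u) is nonempty for some i ≥ 0. Then |N_{i-1}(u)| + |N_i(u)| + |N_{i+1}(u)| ≥ δ + 1. -/
/-- In a connected triangle-free graph of minimum degree `δ`, if the sphere of radius `i`
around `u` is nonempty, then the spheres of radii `i-1, i, i+1` together contain at least
`δ + 1` vertices. -/
theorem three_spheres_triangle_free {V : Type*} [Fintype V] [DecidableEq V]
    (G : SimpleGraph V) [DecidableRel G.Adj] (hG : G.Connected)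
    (htf : G.CliqueFree 3) (δ : ℕ) (hδ : ∀ v, δ ≤ G.degree v)
    (u : V) (i : ℕ) (h1 : (G.isphere u i).Nonempty) :
    δ + 1 ≤ (G.isphere u ((i : ℤ) - 1)).card + (G.isphere u i).card
      + (G.isphere u ((i : ℤ) + 1)).card := by
  obtain ⟨v, hv⟩ := h1
  rw [SimpleGraph.isphere, Finset.mem_filter] at hv
  have hdv : (G.dist u v : ℤ) = i := hv.2
  have hsub : insert v (G.neighborFinset v) ⊆
      (G.isphere u ((i : ℤ) - 1)) ∪ (G.isphere u i) ∪ (G.isphere u ((i : ℤ) + 1)) := by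
    intro w hw
    rcases Finset.mem_insert.mp hw with rfl | hw
    · exact Finset.mem_union_left _ (Finset.mem_union_right _
        (Finset.mem_filter.mpr ⟨Finset.mem_univ _, hdv⟩))
    · have hadj : G.Adj v w := (G.mem_neighborFinset v w).mp hw
      have h1' : G.dist u w ≤ G.dist u v + 1 := by
        calc G.dist u w ≤ G.dist u v + G.dist v w := hG.dist_triangle
        _ ≤ G.dist u v + 1 := by
            have h : G.dist v w ≤ 1 := by
              simpa using SimpleGraph.dist_le hadj.toWalk
            omega
      have h2' : G.dist u v ≤ G.dist u w + 1 := by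
        calc G.dist u v ≤ G.dist u w + G.dist w v := hG.dist_triangle
        _ ≤ G.dist u w + 1 := by
            have h : G.dist w v ≤ 1 := by
              simpa using SimpleGraph.dist_le hadj.symm.toWalk
            omega
      have : (G.dist u w : ℤ) = (i : ℤ) - 1 ∨ (G.dist u w : ℤ) = i ∨
          (G.dist u w : ℤ) = (i : ℤ) + 1 := by
        have h1'' : (G.dist u w : ℤ) ≤ (G.dist u v : ℤ) + 1 := by exact_mod_cast h1'
        have h2'' : (G.dist u v : ℤ) ≤ (G.dist u w : ℤ) + 1 := by exact_mod_cast h2'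
        omega
      rcases this with h | h | h
      · exact Finset.mem_union_left _ (Finset.mem_union_left _
          (Finset.mem_filter.mpr ⟨Finset.mem_univ _, h⟩))
      · exact Finset.mem_union_left _ (Finset.mem_union_right _
          (Finset.mem_filter.mpr ⟨Finset.mem_univ _, h⟩))
      · exact Finset.mem_union_right _ (Finset.mem_filter.mpr ⟨Finset.mem_univ _, h⟩)
  have hcard : δ + 1 ≤ (insert v (G.neighborFinset v)).card := by
    rw [Finset.card_insert_of_notMem (by simp [SimpleGraph.mem_neighborFinset])]
    have := hδ v
    rw [SimpleGraph.degree] at this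
    omega
  calc δ + 1 ≤ (insert v (G.neighborFinset v)).card := hcard
  _ ≤ ((G.isphere u ((i : ℤ) - 1)) ∪ (G.isphere u i) ∪ (G.isphere u ((i : ℤ) + 1))).card :=
      Finset.card_le_card hsub
  _ ≤ (G.isphere u ((i : ℤ) - 1)).card + (G.isphere u i).card
      + (G.isphere u ((i : ℤ) + 1)).card := by
      calc _ ≤ ((G.isphere u ((i : ℤ) - 1)) ∪ (G.isphere u i)).card
          + (G.isphere u ((i : ℤ) + 1)).card := Finset.card_union_le _ _
      _ ≤ _ := by gcongr; exact Finset.card_union_le _ _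
end

section
/- Let u be a vertex of a connected triangle-free graph G of minimum degree δ with eccentricity d = ecc(u). If |N_{d-1}(u)| ≤ δ - 1, then |N_{d-1}(u)| + |N_d(u)| ≥ 2δ. -/
/-- The eccentricity of a vertex: the maximum distance from it to any vertex. -/
noncomputable def SimpleGraph.eccentNat {V : Type*} [Fintype V] (G : SimpleGraph V) (u : V) : ℕ :=
  Finset.univ.sup (fun w => G.dist u w)

/-- In a connected triangle-free graph of minimum degree `δ`, if `d = ecc(u)` and
`|N_{d-1}(u)| ≤ δ - 1`, then `|N_{d-1}(u)| + |N_d(u)| ≥ 2δ`. -/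
theorem last_two_spheres_triangle_free {V : Type*} [Fintype V] [DecidableEq V]
    (G : SimpleGraph V) [DecidableRel G.Adj] (hG : G.Connected)
    (htf : G.CliqueFree 3) (δ : ℕ) (hδ : ∀ v, δ ≤ G.degree v)
    (u : V) (d : ℕ) (hd : d = G.eccentNat u)
    (hsmall : (G.isphere u ((d : ℤ) - 1)).card ≤ δ - 1) :
    2 * δ ≤ (G.isphere u ((d : ℤ) - 1)).card + (G.isphere u (d : ℤ)).card := by
  classical
  rcases Nat.eq_zero_or_pos δ with h0 | hδ1
  · simp [h0]
  have hnonempty : Nonempty V := hG.nonempty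
  obtain ⟨w, -, hw⟩ := Finset.exists_mem_eq_sup (Finset.univ : Finset V)
    Finset.univ_nonempty (fun w => G.dist u w)
  have hwd : G.dist u w = d := by rw [hd]; exact hw.symm
  have hle : ∀ v, G.dist u v ≤ d := by
    intro v; rw [hd]; exact Finset.le_sup (Finset.mem_univ v)
  have hd1 : 1 ≤ d := by
    by_contra h
    have hd0 : d = 0 := by omega
    have hall : ∀ v, u = v := by
      intro v
      have h1 := hle v
      rw [hd0, Nat.le_zero] at h1
      exact (hG.dist_eq_zero_iff).1 h1
    have hdeg : G.degree u = 0 := by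
      rw [← SimpleGraph.card_neighborFinset_eq_degree, Finset.card_eq_zero]
      ext y
      simp only [SimpleGraph.mem_neighborFinset, Finset.notMem_empty, iff_false]
      intro hy
      exact G.irrefl ((hall y) ▸ hy)
    have := hδ u
    omega
  have hnsub : ∀ y, G.dist u y = d →
      G.neighborFinset y ⊆ G.isphere u ((d : ℤ) - 1) ∪ G.isphere u (d : ℤ) := by
    intro y hy z hz
    rw [SimpleGraph.mem_neighborFinset] at hz
    have h1 : G.dist z y = 1 := by
      rw [SimpleGraph.dist_comm]; exact SimpleGraph.dist_eq_one_iff_adj.2 hz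
    have h2 : G.dist u y ≤ G.dist u z + G.dist z y := hG.dist_triangle
    have h4 := hle z
    simp only [SimpleGraph.isphere, Finset.mem_union, Finset.mem_filter, Finset.mem_univ, true_and]
    omega
  have hxex : ∃ x ∈ G.neighborFinset w, x ∉ G.isphere u ((d : ℤ) - 1) := by
    by_contra h
    push_neg at h
    have hsub : G.neighborFinset w ⊆ G.isphere u ((d : ℤ) - 1) := h
    have hc := Finset.card_le_card hsub
    rw [SimpleGraph.card_neighborFinset_eq_degree] at hc
    have := hδ w
    omega
  obtain ⟨x, hxw, hxn⟩ := hxex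
  have hadj : G.Adj w x := (SimpleGraph.mem_neighborFinset G w x).1 hxw
  have hxd : G.dist u x = d := by
    have hm := hnsub w hwd hxw
    rw [Finset.mem_union] at hm
    rcases hm with hm | hm
    · exact absurd hm hxn
    · simp only [SimpleGraph.isphere, Finset.mem_filter, Finset.mem_univ, true_and] at hm
      exact_mod_cast hm
  have hdisj : Disjoint (G.neighborFinset w) (G.neighborFinset x) := by
    rw [Finset.disjoint_left]
    intro y hyw hyx
    rw [SimpleGraph.mem_neighborFinset] at hyw hyx
    exact htf {w, x, y} (SimpleGraph.is3Clique_triple_iff.2 ⟨hadj, hyw, hyx⟩)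
  have hsdisj : Disjoint (G.isphere u ((d : ℤ) - 1)) (G.isphere u (d : ℤ)) := by
    rw [Finset.disjoint_left]
    intro y h1 h2
    simp only [SimpleGraph.isphere, Finset.mem_filter, Finset.mem_univ, true_and] at h1 h2
    omega
  calc 2 * δ ≤ G.degree w + G.degree x := by have := hδ w; have := hδ x; omega
    _ = (G.neighborFinset w ∪ G.neighborFinset x).card := by
        rw [Finset.card_union_of_disjoint hdisj,
          SimpleGraph.card_neighborFinset_eq_degree, SimpleGraph.card_neighborFinset_eq_degree]
    _ ≤ (G.isphere u ((d : ℤ) - 1) ∪ G.isphere u (d : ℤ)).card :=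
        Finset.card_le_card (Finset.union_subset (hnsub w hwd) (hnsub x hxd))
    _ = _ := Finset.card_union_of_disjoint hsdisj
end

section
/- Let v₀ be a centre vertex of a connected graph G on at least three vertices with radius r. Then for every i with 1 ≤ i ≤ r-1, the sphere N_i(v₀) contains at least 2 vertices. -/
/-- The set of vertices at distance exactly `i` from `u`. -/
noncomputable def SimpleGraph.nsphere {V : Type*} [Fintype V] (G : SimpleGraph V) (u : V) (i : ℕ) : Finset V :=
  Finset.univ.filter (fun w => G.dist u w = i)

/-- The eccentricity of a vertex: the maximum distance from it to any vertex. -/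
noncomputable def SimpleGraph.eccentSup {V : Type*} [Fintype V] (G : SimpleGraph V) (u : V) : ℕ :=
  Finset.univ.sup (fun w => G.dist u w)

private lemma walk_split {V : Type*} {G : SimpleGraph V} (hG : G.Connected) :
    ∀ {u v : V} (W : G.Walk u v) (i : ℕ), i ≤ W.length →
      ∃ q, G.dist u q ≤ i ∧ G.dist q v ≤ W.length - i := by
  intro u v W
  induction W with
  | @nil x =>
    intro i hi
    simp only [SimpleGraph.Walk.length_nil, Nat.le_zero] at hi
    subst hi
    exact ⟨x, le_of_eq SimpleGraph.dist_self, by rw [SimpleGraph.dist_self]; exact Nat.zero_le _⟩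
  | @cons a b c h W ih =>
    intro i hi
    cases i with
    | zero =>
      refine ⟨a, le_of_eq SimpleGraph.dist_self, ?_⟩
      simpa using SimpleGraph.dist_le (SimpleGraph.Walk.cons h W)
    | succ j =>
      obtain ⟨q, hq1, hq2⟩ := ih j (by simpa using Nat.succ_le_succ_iff.mp hi)
      refine ⟨q, ?_, by simpa using hq2⟩
      have hab : G.dist a b ≤ 1 := le_of_eq (SimpleGraph.dist_eq_one_iff_adj.mpr h)
      calc G.dist a q ≤ G.dist a b + G.dist b q := hG.dist_triangle
        _ ≤ 1 + j := Nat.add_le_add hab hq1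
        _ = j + 1 := Nat.add_comm 1 j

/-- On a geodesic we can find a vertex at exact distance `i` from the start
    and distance `dist u v - i` from the end. -/
private lemma existsBetweenAux {V : Type*} {G : SimpleGraph V} (hG : G.Connected)
    (u v : V) (i : ℕ) (hi : i ≤ G.dist u v) :
    ∃ q, G.dist u q = i ∧ G.dist q v = G.dist u v - i := by
  obtain ⟨W, hW⟩ := hG.exists_walk_length_eq_dist u v
  obtain ⟨q, hq1, hq2⟩ := walk_split hG W i (by omega)
  rw [hW] at hq2
  have htri : G.dist u v ≤ G.dist u q + G.dist q v := hG.dist_triangle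
  exact ⟨q, by omega, by omega⟩

/-- If `v₀` is a centre vertex of a connected graph on at least three vertices with
radius `r`, then every sphere `N_i(v₀)` with `1 ≤ i ≤ r - 1` has at least two vertices. -/
theorem sphere_card_two_of_center {V : Type*} [Fintype V] [DecidableEq V]
    (G : SimpleGraph V) (hG : G.Connected) (hn : 3 ≤ Fintype.card V)
    (v₀ : V) (hctr : ∀ v, G.eccentSup v₀ ≤ G.eccentSup v)
    (r : ℕ) (hr : r = G.eccentSup v₀) :
    ∀ i, 1 ≤ i → i ≤ r - 1 → 2 ≤ (G.nsphere v₀ i).card := by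
  intro i h1 hir
  have hr1 : i + 1 ≤ r := by omega
  have hdle : ∀ u : V, G.dist v₀ u ≤ r := by
    intro u
    rw [hr]
    exact Finset.le_sup (Finset.mem_univ u)
  -- a vertex at distance exactly r
  haveI : Nonempty V := Fintype.card_pos_iff.mp (by omega)
  have huniv : (Finset.univ : Finset V).Nonempty := Finset.univ_nonempty
  obtain ⟨a, _, ha⟩ := Finset.exists_mem_eq_sup Finset.univ huniv (fun w => G.dist v₀ w)
  have hda : G.dist v₀ a = r := by rw [hr, SimpleGraph.eccentSup, ha]
  by_contra hcard
  push_neg at hcard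
  -- the unique vertex w at distance i
  obtain ⟨w, hw, -⟩ := existsBetweenAux hG v₀ a i (by omega)
  have huniq : ∀ x, G.dist v₀ x = i → x = w := by
    intro x hx
    by_contra hxw
    have hsub : ({x, w} : Finset V) ⊆ G.nsphere v₀ i := by
      intro y hy
      simp only [Finset.mem_insert, Finset.mem_singleton] at hy
      rcases hy with rfl | rfl <;>
        simp [SimpleGraph.nsphere, hx, hw]
    have := Finset.card_le_card hsub
    rw [Finset.card_pair hxw] at this
    omega
  -- the neighbour of v₀ on a geodesic to w
  obtain ⟨p, hp1, hp2⟩ := existsBetweenAux hG v₀ w 1 (by omega)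
  rw [hw] at hp2
  -- every vertex is within r - 1 of p
  have hkey : ∀ u : V, G.dist p u ≤ r - 1 := by
    intro u
    by_cases hcase : i ≤ G.dist v₀ u
    · obtain ⟨q, hq1, hq2⟩ := existsBetweenAux hG v₀ u i hcase
      have hqw : q = w := huniq q hq1
      subst hqw
      have h3 : G.dist p u ≤ G.dist p q + G.dist q u := hG.dist_triangle
      have h4 := hdle u
      omega
    · have h3 : G.dist p u ≤ G.dist p v₀ + G.dist v₀ u := hG.dist_triangle
      have h5 : G.dist p v₀ = 1 := by rw [SimpleGraph.dist_comm]; exact hp1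
      omega
  have hecc : G.eccentSup p ≤ r - 1 :=
    Finset.sup_le fun u _ => hkey u
  have := hctr p
  rw [← hr] at this
  omega
end

section
/- Let v be a vertex of a C₄-free graph G of minimum degree δ. Then the number of vertices at distance at most 2 from v is at least δ² - 2⌊δ/2⌋ + 1. -/
/-- A graph contains a 4-cycle as a (not necessarily induced) subgraph. -/
def SimpleGraph.HasC4 {V : Type*} (G : SimpleGraph V) : Prop :=
  ∃ a b c d : V, a ≠ c ∧ b ≠ d ∧ G.Adj a b ∧ G.Adj b c ∧ G.Adj c d ∧ G.Adj d a

lemma even_sum_symm' {α : Type*} [DecidableEq α] (s : Finset α) (f : α → α → ℕ)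
    (hsymm : ∀ a b, f a b = f b a) (hdiag : ∀ a, f a a = 0) :
    Even (∑ a ∈ s, ∑ b ∈ s, f a b) := by
  classical
  induction s using Finset.induction_on with
  | empty => simp
  | @insert a s ha ih =>
    rw [Finset.sum_insert ha]
    have h1 : ∑ b ∈ insert a s, f a b = ∑ b ∈ s, f a b := by
      rw [Finset.sum_insert ha, hdiag, zero_add]
    have h2 : ∑ u ∈ s, ∑ b ∈ insert a s, f u b
        = ∑ u ∈ s, (f u a + ∑ b ∈ s, f u b) := by
      refine Finset.sum_congr rfl fun u _ => ?_
      rw [Finset.sum_insert ha]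
    rw [h1, h2, Finset.sum_add_distrib]
    have h3 : ∑ u ∈ s, f u a = ∑ b ∈ s, f a b :=
      Finset.sum_congr rfl (fun u _ => hsymm u a)
    rw [h3]
    obtain ⟨k, hk⟩ := ih
    exact ⟨(∑ b ∈ s, f a b) + k, by omega⟩

/-- In a `C₄`-free graph of minimum degree `δ`, every vertex has at least
`δ² - 2⌊δ/2⌋ + 1` vertices within distance two of it. -/
theorem card_ball_two_C4_free {V : Type*} [Fintype V] [DecidableEq V]
    (G : SimpleGraph V) [DecidableRel G.Adj] (hC4 : ¬ G.HasC4)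
    (δ : ℕ) (hδ : ∀ v, δ ≤ G.degree v) (v : V) :
    δ ^ 2 - 2 * (δ / 2) + 1 ≤ {w : V | ∃ p : G.Walk v w, p.length ≤ 2}.ncard := by
  classical
  set S : Set V := {w : V | ∃ p : G.Walk v w, p.length ≤ 2} with hS
  set A : Finset V := G.neighborFinset v with hA
  have hvA : v ∉ A := by simp [hA]
  set B : V → Finset V := fun u => G.neighborFinset u \ insert v A with hB
  set m : V → ℕ := fun u => (G.neighborFinset u ∩ A).card with hm
  have hd : δ ≤ A.card := hδ v
  -- each u ∈ A has at most one neighbor in A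
  have hm1 : ∀ u ∈ A, m u ≤ 1 := by
    intro u hu
    by_contra h
    push_neg at h
    obtain ⟨x, hx, y, hy, hxy⟩ := Finset.one_lt_card.mp h
    simp only [Finset.mem_inter, SimpleGraph.mem_neighborFinset, hA] at hx hy
    have huv : G.Adj v u := by rwa [hA, SimpleGraph.mem_neighborFinset] at hu
    exact hC4 ⟨u, x, v, y, huv.ne', hxy, hx.1, hx.2.symm, hy.2, hy.1.symm⟩
  -- the sets B u are pairwise disjoint
  have hdisj : ∀ u1 ∈ A, ∀ u2 ∈ A, u1 ≠ u2 → Disjoint (B u1) (B u2) := by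
    intro u1 h1 u2 h2 hne
    rw [Finset.disjoint_left]
    intro w hw1 hw2
    rw [hB] at hw1 hw2
    simp only [Finset.mem_sdiff, SimpleGraph.mem_neighborFinset, Finset.mem_insert,
      not_or, hA, SimpleGraph.mem_neighborFinset] at hw1 hw2 h1 h2
    exact hC4 ⟨v, u1, w, u2, fun h => hw1.2.1 h.symm, hne, h1, hw1.1, hw2.1.symm, h2.symm⟩
  -- lower bound on the size of each B u
  have hBc : ∀ u ∈ A, δ ≤ (B u).card + 1 + m u := by
    intro u hu
    have hsub : G.neighborFinset u ⊆ B u ∪ insert v (G.neighborFinset u ∩ A) := by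
      intro w hw
      rw [Finset.mem_union]
      by_cases h : w ∈ insert v A
      · right
        rcases Finset.mem_insert.mp h with h | h
        · exact Finset.mem_insert.mpr (Or.inl h)
        · exact Finset.mem_insert.mpr (Or.inr (Finset.mem_inter.mpr ⟨hw, h⟩))
      · exact Or.inl (by rw [hB]; exact Finset.mem_sdiff.mpr ⟨hw, h⟩)
    calc δ ≤ G.degree u := hδ u
      _ = (G.neighborFinset u).card := rfl
      _ ≤ (B u ∪ insert v (G.neighborFinset u ∩ A)).card := Finset.card_le_card hsub
      _ ≤ (B u).card + (insert v (G.neighborFinset u ∩ A)).card := Finset.card_union_le _ _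
      _ ≤ (B u).card + (1 + m u) := by
          have := Finset.card_insert_le v (G.neighborFinset u ∩ A)
          simp only [hm]; omega
      _ = (B u).card + 1 + m u := by omega
  -- the sum of m over A is even
  have hmeq : ∀ u, m u = ∑ w ∈ A, (if G.Adj u w then 1 else 0) := by
    intro u
    simp only [hm]
    rw [Finset.inter_comm]
    have heq : A ∩ G.neighborFinset u = A.filter (fun w => G.Adj u w) := by
      ext w; simp [SimpleGraph.mem_neighborFinset]
    rw [heq, Finset.card_filter]
  have hMeven : Even (∑ u ∈ A, m u) := by
    rw [Finset.sum_congr rfl fun u _ => hmeq u]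
    exact even_sum_symm' A (fun a b => if G.Adj a b then 1 else 0)
      (fun a b => by simp [SimpleGraph.adj_comm]) (fun a => by simp)
  have hMd : ∑ u ∈ A, m u ≤ A.card := by
    calc ∑ u ∈ A, m u ≤ ∑ u ∈ A, 1 := Finset.sum_le_sum hm1
      _ = A.card := by simp
  -- the finset of vertices within distance 2
  set T : Finset V := insert v (A ∪ A.biUnion B) with hT
  have hTS : (T : Set V) ⊆ S := by
    intro w hw
    rw [Finset.mem_coe, hT, Finset.mem_insert, Finset.mem_union, Finset.mem_biUnion] at hw
    rw [hS, Set.mem_setOf_eq]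
    rcases hw with rfl | hw | ⟨u, hu, hwu⟩
    · exact ⟨SimpleGraph.Walk.nil, by simp⟩
    · rw [hA, SimpleGraph.mem_neighborFinset] at hw
      exact ⟨SimpleGraph.Walk.cons hw SimpleGraph.Walk.nil, by simp⟩
    · rw [hA, SimpleGraph.mem_neighborFinset] at hu
      rw [hB] at hwu
      have h2 : G.Adj u w := by
        have := (Finset.mem_sdiff.mp hwu).1
        rwa [SimpleGraph.mem_neighborFinset] at this
      exact ⟨SimpleGraph.Walk.cons hu (SimpleGraph.Walk.cons h2 SimpleGraph.Walk.nil), by simp⟩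
  have hcard : T.card ≤ S.ncard := by
    calc T.card = (↑T : Set V).ncard := (Set.ncard_coe_finset T).symm
      _ ≤ S.ncard := Set.ncard_le_ncard hTS (Set.toFinite S)
  -- compute the cardinality of T
  have hvnot : v ∉ A ∪ A.biUnion B := by
    rw [Finset.mem_union, Finset.mem_biUnion]
    push_neg
    refine ⟨hvA, fun u _ => ?_⟩
    rw [hB]
    simp
  have hAB : Disjoint A (A.biUnion B) := by
    rw [Finset.disjoint_right]
    intro w hw
    rw [Finset.mem_biUnion] at hw
    obtain ⟨u, _, hwu⟩ := hw
    rw [hB] at hwu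
    have := (Finset.mem_sdiff.mp hwu).2
    simp only [Finset.mem_insert, not_or] at this
    exact this.2
  have hTcard : T.card = 1 + A.card + ∑ u ∈ A, (B u).card := by
    rw [hT, Finset.card_insert_of_notMem hvnot, Finset.card_union_of_disjoint hAB,
      Finset.card_biUnion hdisj]
    omega
  -- final arithmetic
  rcases le_or_gt δ 1 with h1 | h2
  · have : δ ^ 2 - 2 * (δ / 2) + 1 ≤ 1 + A.card := by
      interval_cases δ <;> simp <;> omega
    omega
  · -- δ ≥ 2
    have hsum : A.card * δ ≤ (∑ u ∈ A, (B u).card) + A.card + ∑ u ∈ A, m u := by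
      calc A.card * δ = ∑ _u ∈ A, δ := by rw [Finset.sum_const, smul_eq_mul, mul_comm]
        _ ≤ ∑ u ∈ A, ((B u).card + 1 + m u) := Finset.sum_le_sum hBc
        _ = (∑ u ∈ A, (B u).card) + A.card + ∑ u ∈ A, m u := by
            rw [Finset.sum_add_distrib, Finset.sum_add_distrib, Finset.sum_const]
            simp [mul_comm]
    obtain ⟨k, hk⟩ := hMeven
    have key : δ ^ 2 ≤ A.card + (∑ u ∈ A, (B u).card) + 2 * (δ / 2) := by
      have hq : 2 * (δ / 2) + δ % 2 = δ := Nat.div_add_mod δ 2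
      have hr : δ % 2 ≤ 1 := by omega
      rcases Nat.lt_or_ge A.card (δ + 1) with hD | hD
      · -- A.card = δ
        have hDe : A.card = δ := by omega
        rw [hDe] at hsum hMd
        have hkq : k ≤ δ / 2 := by omega
        nlinarith [hsum, hk, hkq, hq]
      · -- A.card ≥ δ + 1
        zify at *
        nlinarith [hsum, hk, hMd, hq, hr, hD,
          mul_nonneg (by linarith : (0:ℤ) ≤ (A.card : ℤ) - δ) (by linarith : (0:ℤ) ≤ (δ:ℤ) - 2)]
    have : δ ^ 2 - 2 * (δ / 2) + 1 ≤ T.card := by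
      rw [hTcard]; omega
    omega
end

section
/- Let u be a vertex of a connected C₄-free graph G of minimum degree δ, and let i with 0 ≤ i ≤ ecc(u) be such that N_i(u) is nonempty. Then |N_{i-2}(u)| + |N_{i-1}(u)| + |N_i(u)| + |N_{i+1}(u)| + |N_{i+2}(u)| ≥ δ² - 2⌊δ/2⌋ + 1. -/
lemma even_sym_sum {V : Type*} [DecidableEq V] (e : V → V → ℕ)
    (hsym : ∀ a b, e a b = e b a) (hdiag : ∀ a, e a a = 0) (S : Finset V) :
    Even (∑ w ∈ S, ∑ w' ∈ S, e w w') := by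
  induction S using Finset.induction_on with
  | empty => simp
  | @insert a S ha ih =>
    rw [Finset.sum_insert ha]
    have h1 : ∀ w ∈ S, ∑ w' ∈ insert a S, e w w' = e w a + ∑ w' ∈ S, e w w' := by
      intro w _; rw [Finset.sum_insert ha]
    rw [Finset.sum_congr rfl h1, Finset.sum_insert ha, hdiag, Finset.sum_add_distrib]
    have : ∑ w ∈ S, e w a = ∑ w' ∈ S, e a w' := Finset.sum_congr rfl (fun w _ => hsym w a)
    rw [this]
    obtain ⟨k, hk⟩ := ih
    exact ⟨∑ w' ∈ S, e a w' + k, by omega⟩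

/-- In a connected `C₄`-free graph of minimum degree `δ`, for any nonempty sphere `N_i(u)`,
the five spheres of radii `i-2,…,i+2` contain at least `δ² - 2⌊δ/2⌋ + 1` vertices. -/
theorem five_spheres_C4_free {V : Type*} [Fintype V] [DecidableEq V]
    (G : SimpleGraph V) [DecidableRel G.Adj] (hG : G.Connected) (hC4 : ¬ G.HasC4)
    (δ : ℕ) (hδ : ∀ v, δ ≤ G.degree v)
    (u : V) (i : ℕ) (hi : i ≤ G.eccentSup u) (hne : (G.isphere u i).Nonempty) :
    δ ^ 2 - 2 * (δ / 2) + 1 ≤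
      (G.isphere u ((i : ℤ) - 2)).card + (G.isphere u ((i : ℤ) - 1)).card
      + (G.isphere u i).card + (G.isphere u ((i : ℤ) + 1)).card
      + (G.isphere u ((i : ℤ) + 2)).card := by
  classical
  obtain ⟨v, hv⟩ := hne
  have hdv : G.dist u v = i := by
    simpa [SimpleGraph.isphere] using hv
  have hc4 : ∀ a b c d : V, a ≠ c → b ≠ d → G.Adj a b → G.Adj b c → G.Adj c d →
      G.Adj d a → False := by
    intro a b c d h1 h2 h3 h4 h5 h6
    exact hC4 ⟨a, b, c, d, h1, h2, h3, h4, h5, h6⟩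
  obtain ⟨S, hSsub, hScard⟩ := Finset.exists_subset_card_eq
    (show δ ≤ (G.neighborFinset v).card from hδ v)
  have hadjS : ∀ w ∈ S, G.Adj v w := fun w hw => by
    simpa using hSsub hw
  set B : V → Finset V := fun w => G.neighborFinset w \ insert v S with hB
  -- pairwise disjointness of the B's
  have hdisj : ∀ w ∈ S, ∀ w' ∈ S, w ≠ w' → Disjoint (B w) (B w') := by
    intro w hw w' hw' hne
    rw [Finset.disjoint_left]
    intro x hx hx'
    simp only [hB, Finset.mem_sdiff, SimpleGraph.mem_neighborFinset,
      Finset.mem_insert, not_or] at hx hx'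
    exact hc4 w x w' v hne hx.2.1 hx.1 hx'.1.symm (hadjS w' hw').symm (hadjS w hw)
  -- each w ∈ S has at most one neighbor inside S
  have hm1 : ∀ w ∈ S, (G.neighborFinset w ∩ S).card ≤ 1 := by
    intro w hw
    rw [Finset.card_le_one]
    intro a ha b hb
    by_contra hab
    simp only [Finset.mem_inter, SimpleGraph.mem_neighborFinset] at ha hb
    exact hc4 a w b v hab (hadjS w hw).ne' ha.1.symm hb.1 (hadjS b hb.2).symm
      (hadjS a ha.2)
  -- lower bound for each B w
  have hBcard : ∀ w ∈ S, δ ≤ (B w).card + 1 + (G.neighborFinset w ∩ S).card := by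
    intro w hw
    have hsub : G.neighborFinset w ⊆ B w ∪ insert v (G.neighborFinset w ∩ S) := by
      intro x hx
      by_cases hxs : x ∈ insert v S
      · rcases Finset.mem_insert.mp hxs with h | h
        · subst h; simp
        · simp [Finset.mem_union, Finset.mem_insert, Finset.mem_inter, hx, h]
      · exact Finset.mem_union_left _ (Finset.mem_sdiff.mpr ⟨hx, hxs⟩)
    calc δ ≤ G.degree w := hδ w
      _ = (G.neighborFinset w).card := rfl
      _ ≤ (B w ∪ insert v (G.neighborFinset w ∩ S)).card := Finset.card_le_card hsub
      _ ≤ (B w).card + (insert v (G.neighborFinset w ∩ S)).card := Finset.card_union_le _ _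
      _ ≤ (B w).card + (1 + (G.neighborFinset w ∩ S).card) := by
          exact Nat.add_le_add_left (by
            simpa [add_comm] using Finset.card_insert_le v (G.neighborFinset w ∩ S)) _
      _ = (B w).card + 1 + (G.neighborFinset w ∩ S).card := by ring
  -- the sum of the m's is even
  have heven : Even (∑ w ∈ S, (G.neighborFinset w ∩ S).card) := by
    have hrw : ∀ w ∈ S, (G.neighborFinset w ∩ S).card
        = ∑ w' ∈ S, (if G.Adj w w' then 1 else 0) := by
      intro w _
      rw [← Finset.card_filter]
      congr 1
      ext x
      simp [Finset.mem_inter, SimpleGraph.mem_neighborFinset, and_comm]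
    rw [Finset.sum_congr rfl hrw]
    exact even_sym_sum _ (fun a b => by simp [SimpleGraph.adj_comm])
      (fun a => by simp) S
  have hmsum : ∑ w ∈ S, (G.neighborFinset w ∩ S).card ≤ 2 * (δ / 2) := by
    have hle : ∑ w ∈ S, (G.neighborFinset w ∩ S).card ≤ δ := by
      calc ∑ w ∈ S, (G.neighborFinset w ∩ S).card ≤ ∑ _w ∈ S, 1 :=
            Finset.sum_le_sum hm1
        _ = δ := by simp [hScard]
    obtain ⟨k, hk⟩ := heven
    omega
  -- the big set T
  set T : Finset V := insert v (S ∪ S.biUnion B) with hT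
  have hvS : v ∉ S := fun h => G.irrefl (hadjS v h)
  have hvBun : v ∉ S.biUnion B := by
    intro h
    obtain ⟨w, _, hw⟩ := Finset.mem_biUnion.mp h
    simp [hB] at hw
  have hSBun : Disjoint S (S.biUnion B) := by
    rw [Finset.disjoint_left]
    intro x hx h
    obtain ⟨w, _, hw⟩ := Finset.mem_biUnion.mp h
    simp [hB, Finset.mem_sdiff, Finset.mem_insert] at hw
    exact hw.2.2 hx
  have hTcard : T.card = 1 + (δ + ∑ w ∈ S, (B w).card) := by
    rw [hT, Finset.card_insert_of_notMem (by simp [hvS, hvBun]),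
      Finset.card_union_of_disjoint hSBun, hScard, Finset.card_biUnion hdisj]
    ring
  -- T.card lower bound
  have hTlb : δ * δ ≤ ∑ w ∈ S, (B w).card + δ + 2 * (δ / 2) := by
    calc δ * δ = ∑ _w ∈ S, δ := by rw [Finset.sum_const, hScard, smul_eq_mul]
      _ ≤ ∑ w ∈ S, ((B w).card + 1 + (G.neighborFinset w ∩ S).card) :=
          Finset.sum_le_sum hBcard
      _ = ∑ w ∈ S, (B w).card + δ + ∑ w ∈ S, (G.neighborFinset w ∩ S).card := by
          rw [Finset.sum_add_distrib, Finset.sum_add_distrib]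
          simp [hScard]
      _ ≤ ∑ w ∈ S, (B w).card + δ + 2 * (δ / 2) := by
          exact Nat.add_le_add_left hmsum _
  -- every element of T is within distance 2 of v
  have hTdist : ∀ x ∈ T, G.dist v x ≤ 2 := by
    intro x hx
    rcases Finset.mem_insert.mp hx with h | h
    · subst h
      rw [SimpleGraph.dist_self]
      omega
    rcases Finset.mem_union.mp h with h | h
    · have hadj := hadjS x h
      have h1 : G.dist v x ≤ 1 := by
        simpa [SimpleGraph.Adj.toWalk] using G.dist_le hadj.toWalk
      omega
    · obtain ⟨w, hw, hxw⟩ := Finset.mem_biUnion.mp h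
      have hadj1 := hadjS w hw
      have hadj2 : G.Adj w x := by
        simp only [hB, Finset.mem_sdiff, SimpleGraph.mem_neighborFinset] at hxw
        exact hxw.1
      calc G.dist v x ≤ G.dist v w + G.dist w x := hG.dist_triangle
        _ ≤ 1 + 1 := by
            gcongr
            · simpa [SimpleGraph.Adj.toWalk] using G.dist_le hadj1.toWalk
            · simpa [SimpleGraph.Adj.toWalk] using G.dist_le hadj2.toWalk
        _ = 2 := rfl
  -- T is inside the five spheres
  set Usph : Finset V := G.isphere u ((i : ℤ) - 2) ∪ G.isphere u ((i : ℤ) - 1)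
    ∪ G.isphere u i ∪ G.isphere u ((i : ℤ) + 1) ∪ G.isphere u ((i : ℤ) + 2) with hU
  have hTsub : T ⊆ Usph := by
    intro x hx
    have h2 := hTdist x hx
    have hub : G.dist u x ≤ i + 2 := by
      calc G.dist u x ≤ G.dist u v + G.dist v x := hG.dist_triangle
        _ ≤ i + 2 := by rw [hdv]; omega
    have hlb : i ≤ G.dist u x + 2 := by
      have : G.dist u v ≤ G.dist u x + G.dist x v := hG.dist_triangle
      have hcomm : G.dist x v = G.dist v x := SimpleGraph.dist_comm
      rw [hdv, hcomm] at this
      omega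
    simp only [hU, Finset.mem_union, SimpleGraph.isphere, Finset.mem_filter,
      Finset.mem_univ, true_and]
    omega
  have hfinal : Usph.card ≤
      (G.isphere u ((i : ℤ) - 2)).card + (G.isphere u ((i : ℤ) - 1)).card
      + (G.isphere u i).card + (G.isphere u ((i : ℤ) + 1)).card
      + (G.isphere u ((i : ℤ) + 2)).card := by
    rw [hU]
    refine (Finset.card_union_le _ _).trans (Nat.add_le_add_right ?_ _)
    refine (Finset.card_union_le _ _).trans (Nat.add_le_add_right ?_ _)
    refine (Finset.card_union_le _ _).trans (Nat.add_le_add_right ?_ _)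
    exact Finset.card_union_le _ _
  have hcard := Finset.card_le_card hTsub
  have hsq : δ ^ 2 = δ * δ := sq δ
  omega
end

section
/- Let X = (n₀, n₁, …, n_d) be a finite sequence of nonnegative integers satisfying: n₀ = 1; Σᵢ nᵢ = n; nᵢ ≥ 1 for 0 ≤ i ≤ d; n_{i-1}+nᵢ+n_{i+1}+n_{i+2} ≥ 2δ whenever nᵢ, n_{i+1} ≥ 1 (with n_j = 0 outside 0..d); n_{i-1}+nᵢ+n_{i+1} ≥ δ+1 whenever nᵢ ≥ 1; and if n_{d-1} ≤ δ-1 then n_{d-1}+n_d ≥ 2δ. If δ ≥ 2, n ≥ 6δ, and X maximizes g(X) = Σᵢ i·nᵢ among all such sequences (over all lengths d), then n₂ = δ - 1. -/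
/-- `f : ℤ → ℕ` represents a sequence `(n₀, …, n_d)` (zero outside `[0, d]`)
satisfying conditions (A1)–(A6) with parameters `n`, `δ`, where additionally
`nᵢ ≥ 1` for all `0 ≤ i ≤ d`. -/
def IsGoodSeq (n δ : ℕ) (d : ℕ) (f : ℤ → ℕ) : Prop :=
  (∀ j : ℤ, (j < 0 ∨ (d : ℤ) < j) → f j = 0) ∧
  f 0 = 1 ∧
  (∑ j ∈ Finset.Icc (0 : ℤ) (d : ℤ), f j) = n ∧
  (∀ i : ℤ, 0 ≤ i → i ≤ (d : ℤ) → 1 ≤ f i) ∧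
  (∀ i : ℤ, 0 ≤ i → 1 ≤ f i → 1 ≤ f (i + 1) →
    2 * δ ≤ f (i - 1) + f i + f (i + 1) + f (i + 2)) ∧
  (∀ i : ℤ, 0 ≤ i → 1 ≤ f i → δ + 1 ≤ f (i - 1) + f i + f (i + 1)) ∧
  (f ((d : ℤ) - 1) ≤ δ - 1 → 2 * δ ≤ f ((d : ℤ) - 1) + f (d : ℤ))

/-- The weight `g(X) = Σᵢ i·nᵢ` of a sequence. -/
noncomputable def gval (d : ℕ) (f : ℤ → ℕ) : ℤ :=
  ∑ j ∈ Finset.Icc (0 : ℤ) (d : ℤ), j * (f j : ℤ)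

lemma sum_pair_nat (s : Finset ℤ) (f g : ℤ → ℕ) (a b : ℤ) (ha : a ∈ s) (hb : b ∈ s)
    (hab : a ≠ b) (hoff : ∀ j, j ≠ a → j ≠ b → g j = f j)
    (hab2 : g a + g b = f a + f b) :
    ∑ j ∈ s, g j = ∑ j ∈ s, f j := by
  classical
  have ha' : a ∈ s.erase b := Finset.mem_erase.2 ⟨hab, ha⟩
  rw [← Finset.sum_erase_add s g hb, ← Finset.sum_erase_add s f hb,
      ← Finset.sum_erase_add _ g ha', ← Finset.sum_erase_add _ f ha']
  have h : ∑ j ∈ (s.erase b).erase a, g j = ∑ j ∈ (s.erase b).erase a, f j := by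
    apply Finset.sum_congr rfl
    intro j hj
    have hj1 := Finset.mem_erase.1 hj
    have hj2 := Finset.mem_erase.1 hj1.2
    exact hoff j hj1.1 hj2.1
  omega

lemma sum_pair_int (s : Finset ℤ) (F G : ℤ → ℤ) (a b : ℤ) (c : ℤ) (ha : a ∈ s) (hb : b ∈ s)
    (hab : a ≠ b) (hoff : ∀ j, j ≠ a → j ≠ b → G j = F j)
    (hab2 : G a + G b = F a + F b + c) :
    ∑ j ∈ s, G j = (∑ j ∈ s, F j) + c := by
  classical
  have ha' : a ∈ s.erase b := Finset.mem_erase.2 ⟨hab, ha⟩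
  rw [← Finset.sum_erase_add s G hb, ← Finset.sum_erase_add s F hb,
      ← Finset.sum_erase_add _ G ha', ← Finset.sum_erase_add _ F ha']
  have h : ∑ j ∈ (s.erase b).erase a, G j = ∑ j ∈ (s.erase b).erase a, F j := by
    apply Finset.sum_congr rfl
    intro j hj
    have hj1 := Finset.mem_erase.1 hj
    have hj2 := Finset.mem_erase.1 hj1.2
    exact hoff j hj1.1 hj2.1
  linarith

lemma sum_Icc1 (f : ℤ → ℕ) : ∑ j ∈ Finset.Icc (0:ℤ) ((1:ℕ):ℤ), f j = f 0 + f 1 := by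
  rw [show ((1:ℕ):ℤ) = 1 by norm_num, show Finset.Icc (0:ℤ) 1 = {0,1} by decide]
  simp [Finset.sum_insert]

lemma sum_Icc2 (f : ℤ → ℕ) : ∑ j ∈ Finset.Icc (0:ℤ) ((2:ℕ):ℤ), f j = f 0 + f 1 + f 2 := by
  rw [show ((2:ℕ):ℤ) = 2 by norm_num, show Finset.Icc (0:ℤ) 2 = {0,1,2} by decide]
  simp [Finset.sum_insert, Finset.mem_insert]
  ring

lemma sum_Icc3 (f : ℤ → ℕ) :
    ∑ j ∈ Finset.Icc (0:ℤ) ((3:ℕ):ℤ), f j = f 0 + f 1 + f 2 + f 3 := by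
  rw [show ((3:ℕ):ℤ) = 3 by norm_num, show Finset.Icc (0:ℤ) 3 = {0,1,2,3} by decide]
  simp [Finset.sum_insert, Finset.mem_insert]
  ring

lemma gval_eval1 (f : ℤ → ℕ) : gval 1 f = (f 1 : ℤ) := by
  unfold gval
  rw [show ((1:ℕ):ℤ) = 1 by norm_num, show Finset.Icc (0:ℤ) 1 = {0,1} by decide]
  simp

lemma gval_eval2 (f : ℤ → ℕ) : gval 2 f = (f 1 : ℤ) + 2 * f 2 := by
  unfold gval
  rw [show ((2:ℕ):ℤ) = 2 by norm_num, show Finset.Icc (0:ℤ) 2 = {0,1,2} by decide]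
  simp [Finset.sum_insert, Finset.mem_insert]

lemma gval_eval3 (f : ℤ → ℕ) : gval 3 f = (f 1 : ℤ) + 2 * f 2 + 3 * f 3 := by
  unfold gval
  rw [show ((3:ℕ):ℤ) = 3 by norm_num, show Finset.Icc (0:ℤ) 3 = {0,1,2,3} by decide]
  simp [Finset.sum_insert, Finset.mem_insert]
  ring

lemma move12 (n δ : ℕ) (d : ℕ) (f : ℤ → ℕ) (hδ : 2 ≤ δ)
    (hf : IsGoodSeq n δ d f) (hd : 2 ≤ d) (h1 : δ + 1 ≤ f 1)
    (g : ℤ → ℕ) (hg1 : g 1 = f 1 - 1) (hg2 : g 2 = f 2 + 1)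
    (hge : ∀ j, j ≠ 1 → j ≠ 2 → g j = f j) :
    IsGoodSeq n δ d g ∧ gval d g = gval d f + 1 := by
  obtain ⟨hz, h0, hsum, hpos, hA4, hA5, hA6⟩ := hf
  have hm1 : f (-1) = 0 := hz (-1) (by norm_num)
  have hp2 : 1 ≤ f 2 := hpos 2 (by norm_num) (by omega)
  have hf1pos : 1 ≤ f 1 := by omega
  have gm1 : g (-1) = f (-1) := hge _ (by norm_num) (by norm_num)
  have g0 : g 0 = f 0 := hge _ (by norm_num) (by norm_num)
  have g3 : g 3 = f 3 := hge _ (by norm_num) (by norm_num)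
  have g4 : g 4 = f 4 := hge _ (by norm_num) (by norm_num)
  have g5 : g 5 = f 5 := hge _ (by norm_num) (by norm_num)
  have g6 : g 6 = f 6 := hge _ (by norm_num) (by norm_num)
  constructor
  · refine ⟨?_, ?_, ?_, ?_, ?_, ?_, ?_⟩
    · intro j hj
      by_cases e1 : j = 1
      · subst e1; exfalso; rcases hj with h|h <;> omega
      by_cases e2 : j = 2
      · subst e2; exfalso; rcases hj with h|h <;> omega
      · rw [hge j e1 e2]; exact hz j hj
    · rw [g0]; exact h0
    · rw [sum_pair_nat _ f g 1 2 (Finset.mem_Icc.2 ⟨by norm_num, by omega⟩)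
        (Finset.mem_Icc.2 ⟨by norm_num, by omega⟩) (by norm_num) hge (by omega)]
      exact hsum
    · intro i h0i hid
      by_cases e1 : i = 1
      · subst e1; omega
      by_cases e2 : i = 2
      · subst e2; omega
      · rw [hge i e1 e2]; exact hpos i h0i hid
    · intro i h0i hi hi1
      rcases lt_or_ge i 5 with hsm | hlg
      · interval_cases i
        · norm_num [gm1, g0, hg1, hg2, g3] at hi hi1 ⊢
          have H := hA4 0 le_rfl
          norm_num at H
          have H' := H (by omega) (by omega)
          omega
        · norm_num [g0, hg1, hg2, g3] at hi hi1 ⊢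
          have H := hA4 1 (by norm_num)
          norm_num at H
          have H' := H (by omega) (by omega)
          omega
        · norm_num [hg1, hg2, g3, g4] at hi hi1 ⊢
          have H := hA4 2 (by norm_num)
          norm_num at H
          have H' := H (by omega) (by omega)
          omega
        · norm_num [hg2, g3, g4, g5] at hi hi1 ⊢
          have H := hA4 3 (by norm_num)
          norm_num at H
          have H' := H (by omega) (by omega)
          omega
        · norm_num [g3, g4, g5, g6] at hi hi1 ⊢
          have H := hA4 4 (by norm_num)
          norm_num at H
          have H' := H (by omega) (by omega)
          omega
      · have r0 : g (i-1) = f (i-1) := hge _ (by omega) (by omega)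
        have r1 : g i = f i := hge _ (by omega) (by omega)
        have r2 : g (i+1) = f (i+1) := hge _ (by omega) (by omega)
        have r3 : g (i+2) = f (i+2) := hge _ (by omega) (by omega)
        rw [r1] at hi; rw [r2] at hi1
        rw [r0, r1, r2, r3]
        exact hA4 i (by omega) hi hi1
    · intro i h0i hi
      rcases lt_or_ge i 5 with hsm | hlg
      · interval_cases i
        · norm_num [gm1, g0, hg1, hg2] at hi ⊢
          omega
        · norm_num [g0, hg1, hg2] at hi ⊢
          have H := hA5 1 (by norm_num)
          norm_num at H
          have H' := H (by omega)
          omega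
        · norm_num [hg1, hg2, g3] at hi ⊢
          have H := hA5 2 (by norm_num)
          norm_num at H
          have H' := H (by omega)
          omega
        · norm_num [hg2, g3, g4] at hi ⊢
          have H := hA5 3 (by norm_num)
          norm_num at H
          have H' := H (by omega)
          omega
        · norm_num [g3, g4, g5] at hi ⊢
          have H := hA5 4 (by norm_num)
          norm_num at H
          have H' := H (by omega)
          omega
      · have r0 : g (i-1) = f (i-1) := hge _ (by omega) (by omega)
        have r1 : g i = f i := hge _ (by omega) (by omega)
        have r2 : g (i+1) = f (i+1) := hge _ (by omega) (by omega)
        rw [r1] at hi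
        rw [r0, r1, r2]
        exact hA5 i (by omega) hi
    · rcases (by omega : d = 2 ∨ d = 3 ∨ 4 ≤ d) with rfl | rfl | h4
      · norm_num [hg1, hg2]
        omega
      · norm_num [hg2, g3]
        intro h
        have H := hA6
        norm_num at H
        have H' := H (by omega)
        omega
      · rw [hge ((d:ℤ)-1) (by omega) (by omega), hge (d:ℤ) (by omega) (by omega)]
        exact hA6
  · show (∑ j ∈ Finset.Icc (0:ℤ) (d:ℤ), j * (g j : ℤ)) = (∑ j ∈ Finset.Icc (0:ℤ) (d:ℤ), j * (f j : ℤ)) + 1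
    apply sum_pair_int _ _ _ 1 2 1 (Finset.mem_Icc.2 ⟨by norm_num, by omega⟩)
      (Finset.mem_Icc.2 ⟨by norm_num, by omega⟩) (by norm_num)
    · intro j hj1 hj2
      rw [hge j hj1 hj2]
    · rw [hg1, hg2]
      push_cast [Nat.cast_sub hf1pos]
      ring

lemma move23 (n δ : ℕ) (d : ℕ) (f : ℤ → ℕ) (hδ : 2 ≤ δ)
    (hf : IsGoodSeq n δ d f) (hd : 3 ≤ d) (h1 : δ ≤ f 1) (h2 : δ ≤ f 2)
    (hAux : d = 3 → f 2 ≤ δ → 2 * δ ≤ f 2 + f 3)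
    (g : ℤ → ℕ) (hg2 : g 2 = f 2 - 1) (hg3 : g 3 = f 3 + 1)
    (hge : ∀ j, j ≠ 2 → j ≠ 3 → g j = f j) :
    IsGoodSeq n δ d g ∧ gval d g = gval d f + 1 := by
  obtain ⟨hz, h0, hsum, hpos, hA4, hA5, hA6⟩ := hf
  have hm1 : f (-1) = 0 := hz (-1) (by norm_num)
  have hp3 : 1 ≤ f 3 := hpos 3 (by norm_num) (by omega)
  have hf2pos : 1 ≤ f 2 := by omega
  have gm1 : g (-1) = f (-1) := hge _ (by norm_num) (by norm_num)
  have g0 : g 0 = f 0 := hge _ (by norm_num) (by norm_num)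
  have g1 : g 1 = f 1 := hge _ (by norm_num) (by norm_num)
  have g4 : g 4 = f 4 := hge _ (by norm_num) (by norm_num)
  have g5 : g 5 = f 5 := hge _ (by norm_num) (by norm_num)
  have g6 : g 6 = f 6 := hge _ (by norm_num) (by norm_num)
  constructor
  · refine ⟨?_, ?_, ?_, ?_, ?_, ?_, ?_⟩
    · intro j hj
      by_cases e1 : j = 2
      · subst e1; exfalso; rcases hj with h|h <;> omega
      by_cases e2 : j = 3
      · subst e2; exfalso; rcases hj with h|h <;> omega
      · rw [hge j e1 e2]; exact hz j hj
    · rw [g0]; exact h0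
    · rw [sum_pair_nat _ f g 2 3 (Finset.mem_Icc.2 ⟨by norm_num, by omega⟩)
        (Finset.mem_Icc.2 ⟨by norm_num, by omega⟩) (by norm_num) hge (by omega)]
      exact hsum
    · intro i h0i hid
      by_cases e1 : i = 2
      · subst e1; omega
      by_cases e2 : i = 3
      · subst e2; omega
      · rw [hge i e1 e2]; exact hpos i h0i hid
    · intro i h0i hi hi1
      rcases lt_or_ge i 5 with hsm | hlg
      · interval_cases i
        · norm_num [gm1, g0, g1, hg2] at hi hi1 ⊢
          omega
        · norm_num [g0, g1, hg2, hg3] at hi hi1 ⊢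
          have H := hA4 1 (by norm_num)
          norm_num at H
          have H' := H (by omega) (by omega)
          omega
        · norm_num [g1, hg2, hg3, g4] at hi hi1 ⊢
          have H := hA4 2 (by norm_num)
          norm_num at H
          have H' := H (by omega) (by omega)
          omega
        · norm_num [hg2, hg3, g4, g5] at hi hi1 ⊢
          have H := hA4 3 (by norm_num)
          norm_num at H
          have H' := H (by omega) (by omega)
          omega
        · norm_num [hg3, g4, g5, g6] at hi hi1 ⊢
          have H := hA4 4 (by norm_num)
          norm_num at H
          have H' := H (by omega) (by omega)
          omega
      · have r0 : g (i-1) = f (i-1) := hge _ (by omega) (by omega)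
        have r1 : g i = f i := hge _ (by omega) (by omega)
        have r2 : g (i+1) = f (i+1) := hge _ (by omega) (by omega)
        have r3 : g (i+2) = f (i+2) := hge _ (by omega) (by omega)
        rw [r1] at hi; rw [r2] at hi1
        rw [r0, r1, r2, r3]
        exact hA4 i (by omega) hi hi1
    · intro i h0i hi
      rcases lt_or_ge i 5 with hsm | hlg
      · interval_cases i
        · norm_num [gm1, g0, g1] at hi ⊢
          omega
        · norm_num [g0, g1, hg2] at hi ⊢
          omega
        · norm_num [g1, hg2, hg3] at hi ⊢
          have H := hA5 2 (by norm_num)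
          norm_num at H
          have H' := H (by omega)
          omega
        · norm_num [hg2, hg3, g4] at hi ⊢
          have H := hA5 3 (by norm_num)
          norm_num at H
          have H' := H (by omega)
          omega
        · norm_num [hg3, g4, g5] at hi ⊢
          have H := hA5 4 (by norm_num)
          norm_num at H
          have H' := H (by omega)
          omega
      · have r0 : g (i-1) = f (i-1) := hge _ (by omega) (by omega)
        have r1 : g i = f i := hge _ (by omega) (by omega)
        have r2 : g (i+1) = f (i+1) := hge _ (by omega) (by omega)
        rw [r1] at hi
        rw [r0, r1, r2]
        exact hA5 i (by omega) hi
    · rcases (by omega : d = 3 ∨ d = 4 ∨ 5 ≤ d) with rfl | rfl | h5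
      · norm_num [hg2, hg3]
        intro h
        have H := hAux rfl (by omega)
        omega
      · norm_num [hg3, g4]
        intro h
        have H := hA6
        norm_num at H
        have H' := H (by omega)
        omega
      · rw [hge ((d:ℤ)-1) (by omega) (by omega), hge (d:ℤ) (by omega) (by omega)]
        exact hA6
  · show (∑ j ∈ Finset.Icc (0:ℤ) (d:ℤ), j * (g j : ℤ)) = (∑ j ∈ Finset.Icc (0:ℤ) (d:ℤ), j * (f j : ℤ)) + 1
    apply sum_pair_int _ _ _ 2 3 1 (Finset.mem_Icc.2 ⟨by norm_num, by omega⟩)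
      (Finset.mem_Icc.2 ⟨by norm_num, by omega⟩) (by norm_num)
    · intro j hj1 hj2
      rw [hge j hj1 hj2]
    · rw [hg2, hg3]
      push_cast [Nat.cast_sub hf2pos]
      ring

lemma extend1 (n δ : ℕ) (f : ℤ → ℕ) (hδ : 2 ≤ δ)
    (hf : IsGoodSeq n δ 1 f) (hbig : 2 * δ ≤ f 1)
    (g : ℤ → ℕ) (hg1 : g 1 = f 1 - 1) (hg2 : g 2 = 1)
    (hge : ∀ j, j ≠ 1 → j ≠ 2 → g j = f j) :
    IsGoodSeq n δ 2 g ∧ gval 2 g = gval 1 f + 1 := by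
  obtain ⟨hz, h0, hsum, hpos, hA4, hA5, hA6⟩ := hf
  have hm1 : f (-1) = 0 := hz (-1) (by norm_num)
  have hz2 : f 2 = 0 := hz 2 (by norm_num)
  have hz3 : f 3 = 0 := hz 3 (by norm_num)
  have hz4 : f 4 = 0 := hz 4 (by norm_num)
  have hf1pos : 1 ≤ f 1 := by omega
  have gm1 : g (-1) = f (-1) := hge _ (by norm_num) (by norm_num)
  have g0 : g 0 = f 0 := hge _ (by norm_num) (by norm_num)
  have g3 : g 3 = f 3 := hge _ (by norm_num) (by norm_num)
  have g4 : g 4 = f 4 := hge _ (by norm_num) (by norm_num)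
  constructor
  · refine ⟨?_, ?_, ?_, ?_, ?_, ?_, ?_⟩
    · intro j hj
      have e1 : j ≠ 1 := by omega
      have e2 : j ≠ 2 := by omega
      rw [hge j e1 e2]
      exact hz j (by omega)
    · rw [g0]; exact h0
    · rw [sum_Icc2 g, g0, hg1, hg2]
      rw [sum_Icc1 f] at hsum
      omega
    · intro i h0i hid
      norm_num at hid
      interval_cases i
      · rw [g0]; omega
      · rw [hg1]; omega
      · rw [hg2]
    · intro i h0i hi hi1
      rcases lt_or_ge i 4 with hsm | hlg
      · interval_cases i
        · norm_num [gm1, hm1, g0, h0, hg1, hg2]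
          omega
        · norm_num [g0, h0, hg1, hg2, g3, hz3]
          omega
        · norm_num [g3, hz3] at hi1
        · norm_num [g3, hz3] at hi
      · have r1 : g i = f i := hge _ (by omega) (by omega)
        have : f i = 0 := hz i (by omega)
        omega
    · intro i h0i hi
      rcases lt_or_ge i 4 with hsm | hlg
      · interval_cases i
        · norm_num [gm1, hm1, g0, h0, hg1]
          omega
        · norm_num [g0, h0, hg1, hg2]
          omega
        · norm_num [hg1, hg2, g3, hz3]
          omega
        · norm_num [g3, hz3] at hi
      · have r1 : g i = f i := hge _ (by omega) (by omega)
        have : f i = 0 := hz i (by omega)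
        omega
    · norm_num [hg1, hg2]
      omega
  · rw [gval_eval1 f, gval_eval2 g, hg1, hg2]
    push_cast [Nat.cast_sub hf1pos]
    ring

lemma extend2 (n δ : ℕ) (f : ℤ → ℕ) (hδ : 2 ≤ δ)
    (hf : IsGoodSeq n δ 2 f) (h1 : δ ≤ f 1) (h2 : δ + 1 ≤ f 2)
    (g : ℤ → ℕ) (hg2 : g 2 = f 2 - 1) (hg3 : g 3 = 1)
    (hge : ∀ j, j ≠ 2 → j ≠ 3 → g j = f j) :
    IsGoodSeq n δ 3 g ∧ gval 3 g = gval 2 f + 1 := by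
  obtain ⟨hz, h0, hsum, hpos, hA4, hA5, hA6⟩ := hf
  have hm1 : f (-1) = 0 := hz (-1) (by norm_num)
  have hz3 : f 3 = 0 := hz 3 (by norm_num)
  have hz4 : f 4 = 0 := hz 4 (by norm_num)
  have hz5 : f 5 = 0 := hz 5 (by norm_num)
  have hf2pos : 1 ≤ f 2 := by omega
  have gm1 : g (-1) = f (-1) := hge _ (by norm_num) (by norm_num)
  have g0 : g 0 = f 0 := hge _ (by norm_num) (by norm_num)
  have g1 : g 1 = f 1 := hge _ (by norm_num) (by norm_num)
  have g4 : g 4 = f 4 := hge _ (by norm_num) (by norm_num)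
  have g5 : g 5 = f 5 := hge _ (by norm_num) (by norm_num)
  constructor
  · refine ⟨?_, ?_, ?_, ?_, ?_, ?_, ?_⟩
    · intro j hj
      have e1 : j ≠ 2 := by omega
      have e2 : j ≠ 3 := by omega
      rw [hge j e1 e2]
      exact hz j (by omega)
    · rw [g0]; exact h0
    · rw [sum_Icc3 g, g0, g1, hg2, hg3]
      rw [sum_Icc2 f] at hsum
      omega
    · intro i h0i hid
      norm_num at hid
      interval_cases i
      · rw [g0]; omega
      · rw [g1]; omega
      · rw [hg2]; omega
      · rw [hg3]
    · intro i h0i hi hi1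
      rcases lt_or_ge i 5 with hsm | hlg
      · interval_cases i
        · norm_num [gm1, hm1, g0, h0, g1, hg2]
          omega
        · norm_num [g0, h0, g1, hg2, hg3]
          omega
        · norm_num [g1, hg2, hg3, g4, hz4]
          omega
        · norm_num [g4, hz4] at hi1
        · norm_num [g4, hz4] at hi
      · have r1 : g i = f i := hge _ (by omega) (by omega)
        have : f i = 0 := hz i (by omega)
        omega
    · intro i h0i hi
      rcases lt_or_ge i 5 with hsm | hlg
      · interval_cases i
        · norm_num [gm1, hm1, g0, h0, g1]
          omega
        · norm_num [g0, h0, g1, hg2]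
          omega
        · norm_num [g1, hg2, hg3]
          omega
        · norm_num [hg2, hg3, g4, hz4]
          omega
        · norm_num [g4, hz4] at hi
      · have r1 : g i = f i := hge _ (by omega) (by omega)
        have : f i = 0 := hz i (by omega)
        omega
    · norm_num [hg2, hg3]
      omega
  · rw [gval_eval2 f, gval_eval3 g, g1, hg2, hg3]
    push_cast [Nat.cast_sub hf2pos]
    ring

lemma move13 (n δ : ℕ) (f : ℤ → ℕ) (hδ : 2 ≤ δ)
    (hf : IsGoodSeq n δ 3 f) (h1 : δ + 1 ≤ f 1) (h2 : δ ≤ f 2)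
    (g : ℤ → ℕ) (hg1 : g 1 = f 1 - 1) (hg3 : g 3 = f 3 + 1)
    (hge : ∀ j, j ≠ 1 → j ≠ 3 → g j = f j) :
    IsGoodSeq n δ 3 g ∧ gval 3 g = gval 3 f + 2 := by
  obtain ⟨hz, h0, hsum, hpos, hA4, hA5, hA6⟩ := hf
  have hm1 : f (-1) = 0 := hz (-1) (by norm_num)
  have hz4 : f 4 = 0 := hz 4 (by norm_num)
  have hz5 : f 5 = 0 := hz 5 (by norm_num)
  have hp3 : 1 ≤ f 3 := hpos 3 (by norm_num) (by norm_num)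
  have hf1pos : 1 ≤ f 1 := by omega
  have gm1 : g (-1) = f (-1) := hge _ (by norm_num) (by norm_num)
  have g0 : g 0 = f 0 := hge _ (by norm_num) (by norm_num)
  have g2 : g 2 = f 2 := hge _ (by norm_num) (by norm_num)
  have g4 : g 4 = f 4 := hge _ (by norm_num) (by norm_num)
  have g5 : g 5 = f 5 := hge _ (by norm_num) (by norm_num)
  constructor
  · refine ⟨?_, ?_, ?_, ?_, ?_, ?_, ?_⟩
    · intro j hj
      have e1 : j ≠ 1 := by omega
      have e2 : j ≠ 3 := by omega
      rw [hge j e1 e2]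
      exact hz j hj
    · rw [g0]; exact h0
    · rw [sum_Icc3 g, g0, hg1, g2, hg3]
      rw [sum_Icc3 f] at hsum
      omega
    · intro i h0i hid
      norm_num at hid
      interval_cases i
      · rw [g0]; omega
      · rw [hg1]; omega
      · rw [g2]; omega
      · rw [hg3]; omega
    · intro i h0i hi hi1
      rcases lt_or_ge i 5 with hsm | hlg
      · interval_cases i
        · norm_num [gm1, hm1, g0, h0, hg1, g2]
          omega
        · norm_num [g0, h0, hg1, g2, hg3]
          have H := hA4 1 (by norm_num)
          norm_num at H
          have H' := H (by omega) (by omega)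
          omega
        · norm_num [hg1, g2, hg3, g4, hz4]
          have H := hA4 2 (by norm_num)
          norm_num at H
          have H' := H (by omega) (by omega)
          omega
        · norm_num [g4, hz4] at hi1
        · norm_num [g4, hz4] at hi
      · have r1 : g i = f i := hge _ (by omega) (by omega)
        have : f i = 0 := hz i (by omega)
        omega
    · intro i h0i hi
      rcases lt_or_ge i 5 with hsm | hlg
      · interval_cases i
        · norm_num [gm1, hm1, g0, h0, hg1]
          omega
        · norm_num [g0, h0, hg1, g2]
          omega
        · norm_num [hg1, g2, hg3]
          have H := hA5 2 (by norm_num)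
          norm_num at H
          have H' := H (by omega)
          omega
        · norm_num [g2, hg3, g4, hz4]
          have H := hA5 3 (by norm_num)
          norm_num at H
          have H' := H (by omega)
          omega
        · norm_num [g4, hz4] at hi
      · have r1 : g i = f i := hge _ (by omega) (by omega)
        have : f i = 0 := hz i (by omega)
        omega
    · norm_num [g2, hg3]
      omega
  · rw [gval_eval3 f, gval_eval3 g, hg1, g2, hg3]
    push_cast [Nat.cast_sub hf1pos]
    ring

/-- If `δ ≥ 2`, `n ≥ 6δ`, and the sequence `X` satisfies (A1)–(A6) and maximizes
`g` among all such sequences (of any length), then `n₂ = δ - 1`. -/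
theorem second_entry_of_maximal_seq (n δ : ℕ) (hδ : 2 ≤ δ) (hn : 6 * δ ≤ n)
    (d : ℕ) (f : ℤ → ℕ) (hf : IsGoodSeq n δ d f)
    (hmax : ∀ (d' : ℕ) (f' : ℤ → ℕ), IsGoodSeq n δ d' f' → gval d' f' ≤ gval d f) :
    f 2 = δ - 1 := by
  obtain ⟨hz, h0, hsum, hpos, hA4, hA5, hA6⟩ := id hf
  have hm1 : f (-1) = 0 := hz (-1) (by norm_num)
  have h1δ : δ ≤ f 1 := by
    have H := hA5 0 le_rfl
    norm_num at H
    have H' := H (by omega)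
    omega
  have hd1 : 1 ≤ d := by
    by_contra hcon
    have h10 : f 1 = 0 := hz 1 (by omega)
    omega
  have hd2 : 2 ≤ d := by
    by_contra hcon
    have hdd : d = 1 := by omega
    subst hdd
    have hfs : f 0 + f 1 = n := by rw [← sum_Icc1 f]; exact hsum
    obtain ⟨hgood, hgv⟩ := extend1 n δ f hδ hf (by omega)
      (fun j => if j = 1 then f 1 - 1 else if j = 2 then 1 else f j)
      (by norm_num) (by norm_num) (by intro j e1 e2; simp [e1, e2])
    have hle := hmax 2 _ hgood
    omega
  have hp2 : 1 ≤ f 2 := hpos 2 (by norm_num) (by omega)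
  have hA40' : 2 * δ ≤ f (-1) + f 0 + f 1 + f 2 := by
    have H := hA4 0 le_rfl
    norm_num at H
    exact H (by omega) (by omega)
  have hnot_small : ¬ (f 2 + 2 ≤ δ) := by
    intro hsm
    obtain ⟨hgood, hgv⟩ := move12 n δ d f hδ hf hd2 (by omega)
      (fun j => if j = 1 then f 1 - 1 else if j = 2 then f 2 + 1 else f j)
      (by norm_num) (by norm_num) (by intro j e1 e2; simp [e1, e2])
    have hle := hmax d _ hgood
    omega
  have hnot_big : ¬ (δ ≤ f 2) := by
    intro hbig
    rcases (by omega : d = 2 ∨ d = 3 ∨ 4 ≤ d) with hdd | hdd | h4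
    · subst hdd
      have hfs : f 0 + f 1 + f 2 = n := by rw [← sum_Icc2 f]; exact hsum
      rcases (by omega : δ + 1 ≤ f 2 ∨ f 2 = δ) with hgt | he
      · obtain ⟨hgood, hgv⟩ := extend2 n δ f hδ hf h1δ hgt
          (fun j => if j = 2 then f 2 - 1 else if j = 3 then 1 else f j)
          (by norm_num) (by norm_num) (by intro j e1 e2; simp [e1, e2])
        have hle := hmax 3 _ hgood
        omega
      · obtain ⟨hgood, hgv⟩ := move12 n δ 2 f hδ hf (by norm_num) (by omega)
          (fun j => if j = 1 then f 1 - 1 else if j = 2 then f 2 + 1 else f j)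
          (by norm_num) (by norm_num) (by intro j e1 e2; simp [e1, e2])
        have hle := hmax 2 _ hgood
        omega
    · subst hdd
      have hfs : f 0 + f 1 + f 2 + f 3 = n := by rw [← sum_Icc3 f]; exact hsum
      rcases (by omega : δ + 1 ≤ f 2 ∨ (f 2 = δ ∧ δ ≤ f 3) ∨ (f 2 = δ ∧ f 3 + 1 ≤ δ))
        with hgt | hc | hc
      · obtain ⟨hgood, hgv⟩ := move23 n δ 3 f hδ hf (by norm_num) h1δ hbig (by omega)
          (fun j => if j = 2 then f 2 - 1 else if j = 3 then f 3 + 1 else f j)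
          (by norm_num) (by norm_num) (by intro j e1 e2; simp [e1, e2])
        have hle := hmax 3 _ hgood
        omega
      · obtain ⟨hgood, hgv⟩ := move23 n δ 3 f hδ hf (by norm_num) h1δ hbig (by omega)
          (fun j => if j = 2 then f 2 - 1 else if j = 3 then f 3 + 1 else f j)
          (by norm_num) (by norm_num) (by intro j e1 e2; simp [e1, e2])
        have hle := hmax 3 _ hgood
        omega
      · obtain ⟨hgood, hgv⟩ := move13 n δ f hδ hf (by omega) hbig
          (fun j => if j = 1 then f 1 - 1 else if j = 3 then f 3 + 1 else f j)
          (by norm_num) (by norm_num) (by intro j e1 e2; simp [e1, e2])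
        have hle := hmax 3 _ hgood
        omega
    · obtain ⟨hgood, hgv⟩ := move23 n δ d f hδ hf (by omega) h1δ hbig (by omega)
        (fun j => if j = 2 then f 2 - 1 else if j = 3 then f 3 + 1 else f j)
        (by norm_num) (by norm_num) (by intro j e1 e2; simp [e1, e2])
      have hle := hmax d _ hgood
      omega
  omega
end

section
/- Let X = (n₀,…,n_d) be a sequence of positive integers satisfying conditions (A1)–(A6) with parameters n, δ, where δ ≥ 2 and n ≥ 6δ, and suppose some index j with 2 ≤ j ≤ d-2 has n_j ≥ δ. Then the sequence X* obtained from X by decreasing n_j by 1 and increasing n_{j+1} by 1 also satisfies (A1)–(A6), and g(X*) = g(X) + 1. -/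
/-- If `X` satisfies (A1)–(A6) with `δ ≥ 2`, `n ≥ 6δ`, and `n_j ≥ δ` for some
`2 ≤ j ≤ d - 2`, then the sequence obtained by moving one unit from position `j`
to position `j + 1` still satisfies (A1)–(A6), and its weight is `g(X) + 1`. -/
theorem shift_of_large_entry (n δ : ℕ) (hδ : 2 ≤ δ) (hn : 6 * δ ≤ n)
    (d : ℕ) (f : ℤ → ℕ) (hf : IsGoodSeq n δ d f)
    (j : ℤ) (hj2 : 2 ≤ j) (hjd : j ≤ (d : ℤ) - 2) (hjδ : δ ≤ f j) :
    IsGoodSeq n δ d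
      (fun k => if k = j then f j - 1 else if k = j + 1 then f (j + 1) + 1 else f k) ∧
    gval d (fun k => if k = j then f j - 1 else if k = j + 1 then f (j + 1) + 1 else f k)
      = gval d f + 1 := by
  obtain ⟨h0, h1, hsum, hpos, hA4, hA5, hA6⟩ := hf
  have hfj2 : 2 ≤ f j := le_trans hδ hjδ
  set F := (fun k => if k = j then f j - 1 else if k = j + 1 then f (j + 1) + 1 else f k)
    with hF
  have hFj : F j = f j - 1 := by simp [hF]
  have hFj1 : F (j + 1) = f (j + 1) + 1 := by
    rw [hF]; simp only []
    rw [if_neg (show ¬(j + 1 = j) by omega)]; simp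
  have hFo : ∀ k : ℤ, k ≠ j → k ≠ j + 1 → F k = f k := by
    intro k h h'
    rw [hF]; simp only []
    rw [if_neg h, if_neg h']
  have hjm : j ∈ Finset.Icc (0 : ℤ) (d : ℤ) := Finset.mem_Icc.2 ⟨by omega, by omega⟩
  have hj1m : j + 1 ∈ Finset.Icc (0 : ℤ) (d : ℤ) := Finset.mem_Icc.2 ⟨by omega, by omega⟩
  have hcast : ∀ k : ℤ, (F k : ℤ) =
      (f k : ℤ) + (if k = j then (-1 : ℤ) else 0) + (if k = j + 1 then (1 : ℤ) else 0) := by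
    intro k
    by_cases h : k = j
    · subst k
      rw [hFj, if_pos rfl, if_neg (show ¬(j = j + 1) by omega)]
      omega
    · by_cases h' : k = j + 1
      · subst k
        rw [hFj1, if_neg h, if_pos rfl]
        push_cast; ring
      · rw [hFo k h h', if_neg h, if_neg h']
        ring
  -- the sum over Icc 0 d of F, in ℤ
  have hsumZ : (∑ k ∈ Finset.Icc (0 : ℤ) (d : ℤ), (f k : ℤ)) = (n : ℤ) := by
    exact_mod_cast congrArg (Nat.cast : ℕ → ℤ) hsum
  have hsum' : (∑ k ∈ Finset.Icc (0 : ℤ) (d : ℤ), (F k : ℤ)) = (n : ℤ) := by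
    rw [Finset.sum_congr rfl (fun k _ => hcast k), Finset.sum_add_distrib,
      Finset.sum_add_distrib, Finset.sum_ite_eq' _ j (fun _ => (-1 : ℤ)),
      Finset.sum_ite_eq' _ (j + 1) (fun _ => (1 : ℤ)), if_pos hjm, if_pos hj1m, hsumZ]
    ring
  constructor
  · refine ⟨?_, ?_, ?_, ?_, ?_, ?_, ?_⟩
    · -- zero outside
      intro k hk
      rw [hFo k (by omega) (by omega)]
      exact h0 k hk
    · rw [hFo 0 (by omega) (by omega)]; exact h1
    · exact_mod_cast hsum'
    · intro i h0i hid
      by_cases h : i = j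
      · subst i; rw [hFj]; omega
      · by_cases h' : i = j + 1
        · subst i; rw [hFj1]; omega
        · rw [hFo i h h']; exact hpos i h0i hid
    · -- A4
      intro i hi h1' h2'
      have hid : i + 1 ≤ (d : ℤ) := by
        by_contra hc
        push_neg at hc
        rw [hFo (i + 1) (by omega) (by omega), h0 (i + 1) (Or.inr (by omega))] at h2'
        omega
      have hcase : i = j - 2 ∨ i = j - 1 ∨ i = j ∨ i = j + 1 ∨ i = j + 2 ∨
          (i + 2 < j ∨ j + 1 < i - 1) := by omega
      rcases hcase with h | h | h | h | h | h
      · subst i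
        have a1 : F (j - 2 - 1) = f (j - 2 - 1) := hFo _ (by omega) (by omega)
        have a2 : F (j - 2) = f (j - 2) := hFo _ (by omega) (by omega)
        have a3 : F (j - 2 + 1) = f (j - 2 + 1) := hFo _ (by omega) (by omega)
        have a4 : F (j - 2 + 2) = f j - 1 := by
          rw [show j - 2 + 2 = j from by ring, hFj]
        have h5 := hA5 (j - 2) (by omega) (hpos (j - 2) (by omega) (by omega))
        rw [a1, a2, a3, a4]
        omega
      · subst i
        have a1 : F (j - 1 - 1) = f (j - 1 - 1) := hFo _ (by omega) (by omega)
        have a2 : F (j - 1) = f (j - 1) := hFo _ (by omega) (by omega)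
        have a3 : F (j - 1 + 1) = f j - 1 := by
          rw [show j - 1 + 1 = j from by ring, hFj]
        have a4 : F (j - 1 + 2) = f (j + 1) + 1 := by
          rw [show j - 1 + 2 = j + 1 from by ring, hFj1]
        have h4 := hA4 (j - 1) (by omega) (hpos (j - 1) (by omega) (by omega))
          (hpos (j - 1 + 1) (by omega) (by omega))
        rw [show (j : ℤ) - 1 + 1 = j from by ring, show (j : ℤ) - 1 + 2 = j + 1 from by ring]
          at h4
        rw [a1, a2, a3, a4]
        omega
      · subst i
        have a1 : F (j - 1) = f (j - 1) := hFo _ (by omega) (by omega)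
        have a4 : F (j + 2) = f (j + 2) := hFo _ (by omega) (by omega)
        have h4 := hA4 j (by omega) (hpos j (by omega) (by omega))
          (hpos (j + 1) (by omega) (by omega))
        rw [a1, hFj, hFj1, a4]
        omega
      · subst i
        have a1 : F (j + 1 - 1) = f j - 1 := by
          rw [show j + 1 - 1 = j from by ring, hFj]
        have a3 : F (j + 1 + 1) = f (j + 1 + 1) := hFo _ (by omega) (by omega)
        have a4 : F (j + 1 + 2) = f (j + 1 + 2) := hFo _ (by omega) (by omega)
        have h4 := hA4 (j + 1) (by omega) (hpos (j + 1) (by omega) (by omega))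
          (hpos (j + 1 + 1) (by omega) (by omega))
        rw [show (j : ℤ) + 1 - 1 = j from by ring] at h4
        rw [a1, hFj1, a3, a4]
        omega
      · subst i
        have a1 : F (j + 2 - 1) = f (j + 1) + 1 := by
          rw [show j + 2 - 1 = j + 1 from by ring, hFj1]
        have a2 : F (j + 2) = f (j + 2) := hFo _ (by omega) (by omega)
        have a3 : F (j + 2 + 1) = f (j + 2 + 1) := hFo _ (by omega) (by omega)
        have a4 : F (j + 2 + 2) = f (j + 2 + 2) := hFo _ (by omega) (by omega)
        have h4 := hA4 (j + 2) (by omega) (hpos (j + 2) (by omega) (by omega))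
          (hpos (j + 2 + 1) (by omega) (by omega))
        rw [show (j : ℤ) + 2 - 1 = j + 1 from by ring] at h4
        rw [a1, a2, a3, a4]
        omega
      · have a1 : F (i - 1) = f (i - 1) := hFo _ (by omega) (by omega)
        have a2 : F i = f i := hFo _ (by omega) (by omega)
        have a3 : F (i + 1) = f (i + 1) := hFo _ (by omega) (by omega)
        have a4 : F (i + 2) = f (i + 2) := hFo _ (by omega) (by omega)
        have h4 := hA4 i hi (hpos i hi (by omega)) (hpos (i + 1) (by omega) (by omega))
        rw [a1, a2, a3, a4]
        omega
    · -- A5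
      intro i hi h1'
      have hid : i ≤ (d : ℤ) := by
        by_contra hc
        push_neg at hc
        rw [hFo i (by omega) (by omega), h0 i (Or.inr (by omega))] at h1'
        omega
      have hcase : i = j - 1 ∨ i = j ∨ i = j + 1 ∨ i = j + 2 ∨
          (i + 1 < j ∨ j + 1 < i - 1) := by omega
      rcases hcase with h | h | h | h | h
      · subst i
        have a1 : F (j - 1 - 1) = f (j - 1 - 1) := hFo _ (by omega) (by omega)
        have a2 : F (j - 1) = f (j - 1) := hFo _ (by omega) (by omega)
        have a3 : F (j - 1 + 1) = f j - 1 := by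
          rw [show j - 1 + 1 = j from by ring, hFj]
        have hb1 := hpos (j - 1 - 1) (by omega) (by omega)
        have hb2 := hpos (j - 1) (by omega) (by omega)
        rw [a1, a2, a3]
        omega
      · subst i
        have a1 : F (j - 1) = f (j - 1) := hFo _ (by omega) (by omega)
        have h5 := hA5 j (by omega) (hpos j (by omega) (by omega))
        rw [a1, hFj, hFj1]
        omega
      · subst i
        have a1 : F (j + 1 - 1) = f j - 1 := by
          rw [show j + 1 - 1 = j from by ring, hFj]
        have a3 : F (j + 1 + 1) = f (j + 1 + 1) := hFo _ (by omega) (by omega)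
        have h5 := hA5 (j + 1) (by omega) (hpos (j + 1) (by omega) (by omega))
        rw [show (j : ℤ) + 1 - 1 = j from by ring] at h5
        rw [a1, hFj1, a3]
        omega
      · subst i
        have a1 : F (j + 2 - 1) = f (j + 1) + 1 := by
          rw [show j + 2 - 1 = j + 1 from by ring, hFj1]
        have a2 : F (j + 2) = f (j + 2) := hFo _ (by omega) (by omega)
        have a3 : F (j + 2 + 1) = f (j + 2 + 1) := hFo _ (by omega) (by omega)
        have h5 := hA5 (j + 2) (by omega) (hpos (j + 2) (by omega) (by omega))
        rw [show (j : ℤ) + 2 - 1 = j + 1 from by ring] at h5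
        rw [a1, a2, a3]
        omega
      · have a1 : F (i - 1) = f (i - 1) := hFo _ (by omega) (by omega)
        have a2 : F i = f i := hFo _ (by omega) (by omega)
        have a3 : F (i + 1) = f (i + 1) := hFo _ (by omega) (by omega)
        have h5 := hA5 i hi (hpos i hi hid)
        rw [a1, a2, a3]
        omega
    · -- A6
      have hFd : F (d : ℤ) = f (d : ℤ) := hFo _ (by omega) (by omega)
      by_cases hc : (d : ℤ) - 1 = j + 1
      · have e : F ((d : ℤ) - 1) = f ((d : ℤ) - 1) + 1 := by
          rw [hc, hFj1]
        intro h
        rw [e] at h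
        rw [e, hFd]
        have := hA6 (by omega)
        omega
      · have e : F ((d : ℤ) - 1) = f ((d : ℤ) - 1) := hFo _ (by omega) hc
        intro h
        rw [e] at h
        rw [e, hFd]
        exact hA6 h
  · -- g value
    rw [gval, gval]
    calc (∑ k ∈ Finset.Icc (0 : ℤ) (d : ℤ), k * (F k : ℤ))
        = ∑ k ∈ Finset.Icc (0 : ℤ) (d : ℤ), (k * (f k : ℤ)
            + (if k = j then -k else 0) + (if k = j + 1 then k else 0)) := by
          refine Finset.sum_congr rfl (fun k _ => ?_)
          rw [hcast k]
          split_ifs <;> ring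
      _ = (∑ k ∈ Finset.Icc (0 : ℤ) (d : ℤ), k * (f k : ℤ)) + (-j) + (j + 1) := by
          rw [Finset.sum_add_distrib, Finset.sum_add_distrib,
            Finset.sum_ite_eq' _ j (fun k => -k),
            Finset.sum_ite_eq' _ (j + 1) (fun k => k), if_pos hjm, if_pos hj1m]
      _ = (∑ k ∈ Finset.Icc (0 : ℤ) (d : ℤ), k * (f k : ℤ)) + 1 := by ring
end

section
/- Let G be a finite connected graph of order n ≥ 2, let u₀ be any vertex, and suppose the sequence of parts sizes of G with respect to u₀ is palindromic, i.e. with d = ecc(u₀) and nᵢ = |N_i(u₀)|, we have nᵢ = n_{d-i} for all 0 ≤ i ≤ d. Then for every vertex w of G, Σ_v d(w,v) ≥ Σ_{i=0}^{⌊(d-1)/2⌋} (d - 2i)·nᵢ. -/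
/-- If the distance-degree sequence of `u₀` is palindromic (with `d = ecc(u₀)` odd),
then every vertex `w` satisfies `Σ_v d(w,v) ≥ Σ_{i=0}^{(d-1)/2} (d - 2i)·nᵢ`. -/
theorem total_dist_lower_bound_of_palindromic {V : Type*} [Fintype V] [DecidableEq V]
    (G : SimpleGraph V) (hG : G.Connected) (hn : 2 ≤ Fintype.card V)
    (u₀ : V) (d : ℕ) (hd : d = G.eccentNat u₀) (hodd : Odd d)
    (hpal : ∀ i ≤ d, (G.nsphere u₀ i).card = (G.nsphere u₀ (d - i)).card) :
    ∀ w : V, ∑ i ∈ Finset.range ((d - 1) / 2 + 1), (d - 2 * i) * (G.nsphere u₀ i).card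
      ≤ ∑ v, G.dist w v := by
  intro w
  obtain ⟨m, hm⟩ := hodd
  rw [show (d - 1) / 2 = m by omega]
  set t := G.dist u₀ w with ht
  have key : ∀ v : V, G.dist u₀ v ≤ d := fun v => hd ▸ Finset.le_sup (Finset.mem_univ v)
  set f : ℕ → ℕ := fun i => ∑ v ∈ G.nsphere u₀ i, G.dist w v with hf
  have hsum : ∑ i ∈ Finset.range (d + 1), f i = ∑ v, G.dist w v := by
    simp only [hf, SimpleGraph.nsphere]
    exact Finset.sum_fiberwise_of_maps_to
      (fun v _ => Finset.mem_range.mpr (Nat.lt_succ_of_le (key v))) _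
  have hfb : ∀ i : ℕ, ∀ v ∈ G.nsphere u₀ i, (i - t) + (t - i) ≤ G.dist w v := by
    intro i v hv
    simp only [SimpleGraph.nsphere, Finset.mem_filter] at hv
    have h1 := hG.dist_triangle (u := u₀) (v := w) (w := v)
    have h2 := hG.dist_triangle (u := u₀) (v := v) (w := w)
    have hc : G.dist w v = G.dist v w := G.dist_comm
    omega
  have hlow : ∀ i : ℕ, (G.nsphere u₀ i).card * ((i - t) + (t - i)) ≤ f i := by
    intro i
    simpa using Finset.card_nsmul_le_sum (G.nsphere u₀ i) _ _ (hfb i)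
  have hsplit : ∑ i ∈ Finset.range (d + 1), f i
      = ∑ i ∈ Finset.range (m + 1), f i + ∑ i ∈ Finset.Ico (m + 1) (d + 1), f i := by
    rw [Finset.range_eq_Ico, Finset.range_eq_Ico]
    exact (Finset.sum_Ico_consecutive f (m := 0) (n := m + 1) (k := d + 1) (by omega) (by omega)).symm
  have hre : ∑ i ∈ Finset.Ico (m + 1) (d + 1), f i
      = ∑ i ∈ Finset.range (m + 1), f (d - i) := by
    refine Finset.sum_nbij' (i := fun i => d - i) (j := fun i => d - i) ?_ ?_ ?_ ?_ ?_
    · intro a ha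
      simp only [Finset.mem_Ico] at ha
      simp only [Finset.mem_range]
      omega
    · intro a ha
      simp only [Finset.mem_range] at ha
      simp only [Finset.mem_Ico]
      omega
    · intro a ha
      simp only [Finset.mem_Ico] at ha
      show d - (d - a) = a
      omega
    · intro a ha
      simp only [Finset.mem_range] at ha
      show d - (d - a) = a
      omega
    · intro a ha
      simp only [Finset.mem_Ico] at ha
      show f a = f (d - (d - a))
      congr 1
      omega
  have hterm : ∀ i ∈ Finset.range (m + 1),
      (d - 2 * i) * (G.nsphere u₀ i).card ≤ f i + f (d - i) := by
    intro i hi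
    simp only [Finset.mem_range] at hi
    have h1 := hlow i
    have h2 := hlow (d - i)
    have hp := hpal i (by omega)
    set n := (G.nsphere u₀ i).card
    rw [← hp] at h2
    have harith : (d - 2 * i) * n ≤ n * ((i - t) + (t - i)) + n * ((d - i - t) + (t - (d - i))) := by
      have hAB : d - 2 * i ≤ ((i - t) + (t - i)) + ((d - i - t) + (t - (d - i))) := by omega
      calc (d - 2 * i) * n ≤ (((i - t) + (t - i)) + ((d - i - t) + (t - (d - i)))) * n :=
            Nat.mul_le_mul_right n hAB
        _ = n * ((i - t) + (t - i)) + n * ((d - i - t) + (t - (d - i))) := by ring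
    omega
  calc ∑ i ∈ Finset.range (m + 1), (d - 2 * i) * (G.nsphere u₀ i).card
      ≤ ∑ i ∈ Finset.range (m + 1), (f i + f (d - i)) := Finset.sum_le_sum hterm
    _ = ∑ i ∈ Finset.range (m + 1), f i + ∑ i ∈ Finset.range (m + 1), f (d - i) :=
        Finset.sum_add_distrib
    _ = ∑ i ∈ Finset.range (d + 1), f i := by rw [hsplit, hre]
    _ = ∑ v, G.dist w v := hsum
end
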